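/- arXiv:2407.09830 — 5 statements merged into one kernel-verified Lean document; each statement's English description precedes it below -/
import Mathlib

section
/- Let b>0, n∈ℕ₀, α≥0, and f∈C_α^n([b,∞)). Then for every c≥b the restriction f|_{[c,∞)} belongs to C_α^n([c,∞)) and ‖f|_{[c,∞)}‖_{C_α^n([c,∞))} ≤ (n+1)·‖f‖_{C_α^n([b,∞))}. -/
open Set Filter MeasureTheory Topology

noncomputable section

/-- Membership in the space `C_α^n([b,∞))`: `f` is `n`-times continuously differentiable
on `[b,∞)` and its `n`-th derivative satisfies a polynomial bound `M·y^α`. -/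
def MemCnAlpha (b : ℝ) (n : ℕ) (α : ℝ) (f : ℝ → ℂ) : Prop :=
  ContDiffOn ℝ n f (Set.Ici b) ∧
    ∃ M : ℝ, 0 ≤ M ∧ ∀ y ∈ Set.Ici b, ‖iteratedDerivWithin n f (Set.Ici b) y‖ ≤ M * y ^ α

/-- The norm on the space `C_α^n([b,∞))`. -/
def CnAlphaNorm (b : ℝ) (n : ℕ) (α : ℝ) (f : ℝ → ℂ) : ℝ :=
  (∑ k ∈ Finset.range n, ‖iteratedDerivWithin k f (Set.Ici b) b‖ / b ^ ((n : ℝ) - k + α)) +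
    ⨆ y : Set.Ici b, ‖iteratedDerivWithin n f (Set.Ici b) y‖ / (y : ℝ) ^ α

/-- On `[c,∞) ⊆ [b,∞)`, iterated derivatives within the two sets agree. -/
lemma iter_eq (n : ℕ) (f : ℝ → ℂ) {b c : ℝ} (hf : ContDiffOn ℝ n f (Set.Ici b))
    (hc : b ≤ c) {m : ℕ} (hm : m ≤ n) {y : ℝ} (hy : y ∈ Set.Ici c) :
    iteratedDerivWithin m f (Set.Ici c) y = iteratedDerivWithin m f (Set.Ici b) y := by
  have h := ((hf.ftaylorSeriesWithin (uniqueDiffOn_Ici b)).mono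
      (Set.Ici_subset_Ici.mpr hc)).eq_iteratedFDerivWithin_of_uniqueDiffOn
      (by exact_mod_cast hm) (uniqueDiffOn_Ici c) hy
  rw [iteratedDerivWithin_eq_iteratedFDerivWithin, iteratedDerivWithin_eq_iteratedFDerivWithin,
    ← h]
  rfl

lemma CnAlphaNorm_nonneg (b : ℝ) (hb : 0 < b) (n : ℕ) (α : ℝ) (f : ℝ → ℂ)
    (hf : MemCnAlpha b n α f) : 0 ≤ CnAlphaNorm b n α f := by
  obtain ⟨M, hM, hMb⟩ := hf.2
  have hbdd : BddAbove (Set.range fun y : Set.Ici b =>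
      ‖iteratedDerivWithin n f (Set.Ici b) y‖ / (y : ℝ) ^ α) := by
    refine ⟨M, ?_⟩
    rintro _ ⟨y, rfl⟩
    have hy : (0:ℝ) < (y : ℝ) := lt_of_lt_of_le hb y.2
    have := hMb y y.2
    rw [div_le_iff₀ (Real.rpow_pos_of_pos hy α)]
    exact this
  have hsup : (0:ℝ) ≤ ⨆ y : Set.Ici b, ‖iteratedDerivWithin n f (Set.Ici b) y‖ / (y : ℝ) ^ α := by
    have : Nonempty (Set.Ici b) := ⟨⟨b, le_refl b⟩⟩
    refine le_trans ?_ (le_ciSup hbdd ⟨b, le_refl b⟩)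
    positivity
  have hsum : (0:ℝ) ≤ ∑ k ∈ Finset.range n,
      ‖iteratedDerivWithin k f (Set.Ici b) b‖ / b ^ ((n : ℝ) - k + α) := by
    apply Finset.sum_nonneg; intro k _; positivity
  exact add_nonneg hsum hsup

/-- Key pointwise bound: `‖f^{(k)}(t)‖ ≤ ‖f‖ · t^{n-k+α}` for all `t ≥ b`. -/
lemma key_bound (b : ℝ) (hb : 0 < b) (n : ℕ) (α : ℝ) (hα : 0 ≤ α) (f : ℝ → ℂ)
    (hf : MemCnAlpha b n α f) :
    ∀ k ≤ n, ∀ t ∈ Set.Ici b,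
      ‖iteratedDerivWithin k f (Set.Ici b) t‖ ≤ CnAlphaNorm b n α f * t ^ ((n : ℝ) - k + α) := by
  set K := CnAlphaNorm b n α f with hK
  have hK0 : 0 ≤ K := CnAlphaNorm_nonneg b hb n α f hf
  obtain ⟨M, hM, hMb⟩ := hf.2
  have hbdd : BddAbove (Set.range fun y : Set.Ici b =>
      ‖iteratedDerivWithin n f (Set.Ici b) y‖ / (y : ℝ) ^ α) := by
    refine ⟨M, ?_⟩
    rintro _ ⟨y, rfl⟩
    have hy : (0:ℝ) < (y : ℝ) := lt_of_lt_of_le hb y.2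
    rw [div_le_iff₀ (Real.rpow_pos_of_pos hy α)]
    exact hMb y y.2
  have hsum : (0:ℝ) ≤ ∑ k ∈ Finset.range n,
      ‖iteratedDerivWithin k f (Set.Ici b) b‖ / b ^ ((n : ℝ) - k + α) := by
    apply Finset.sum_nonneg; intro k _; positivity
  have hsup0 : (0:ℝ) ≤ ⨆ y : Set.Ici b,
      ‖iteratedDerivWithin n f (Set.Ici b) y‖ / (y : ℝ) ^ α := by
    have : Nonempty (Set.Ici b) := ⟨⟨b, le_refl b⟩⟩
    refine le_trans ?_ (le_ciSup hbdd ⟨b, le_refl b⟩)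
    positivity
  -- bound for k = n
  have htop : ∀ t ∈ Set.Ici b, ‖iteratedDerivWithin n f (Set.Ici b) t‖ ≤ K * t ^ α := by
    intro t ht
    have htpos : (0:ℝ) < t := lt_of_lt_of_le hb ht
    have h1 : ‖iteratedDerivWithin n f (Set.Ici b) t‖ / t ^ α ≤ K := by
      refine le_trans (le_ciSup hbdd ⟨t, ht⟩) ?_
      rw [hK]; unfold CnAlphaNorm; linarith
    calc ‖iteratedDerivWithin n f (Set.Ici b) t‖
        = ‖iteratedDerivWithin n f (Set.Ici b) t‖ / t ^ α * t ^ α := by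
          field_simp
      _ ≤ K * t ^ α := by
          apply mul_le_mul_of_nonneg_right h1 (Real.rpow_pos_of_pos htpos α).le
  -- bound at b for k < n
  have hatb : ∀ k < n, ‖iteratedDerivWithin k f (Set.Ici b) b‖ ≤ K * b ^ ((n : ℝ) - k + α) := by
    intro k hk
    have hsumK : (∑ i ∈ Finset.range n,
        ‖iteratedDerivWithin i f (Set.Ici b) b‖ / b ^ ((n : ℝ) - i + α)) ≤ K := by
      rw [hK]; unfold CnAlphaNorm; linarith
    have hterm : ‖iteratedDerivWithin k f (Set.Ici b) b‖ / b ^ ((n : ℝ) - k + α) ≤ K :=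
      le_trans (Finset.single_le_sum (f := fun i =>
        ‖iteratedDerivWithin i f (Set.Ici b) b‖ / b ^ ((n : ℝ) - i + α))
        (fun i _ => by positivity) (Finset.mem_range.mpr hk)) hsumK
    have hbpos := Real.rpow_pos_of_pos hb ((n : ℝ) - k + α)
    calc ‖iteratedDerivWithin k f (Set.Ici b) b‖
        = ‖iteratedDerivWithin k f (Set.Ici b) b‖ / b ^ ((n : ℝ) - k + α)
            * b ^ ((n : ℝ) - k + α) := by field_simp
      _ ≤ K * b ^ ((n : ℝ) - k + α) := mul_le_mul_of_nonneg_right hterm hbpos.le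
  -- downward induction
  have main : ∀ j : ℕ, ∀ k, k ≤ n → n - k = j → ∀ t ∈ Set.Ici b,
      ‖iteratedDerivWithin k f (Set.Ici b) t‖ ≤ K * t ^ ((n : ℝ) - k + α) := by
    intro j
    induction j with
    | zero =>
      intro k hk hnk t ht
      have hkeq : k = n := by omega
      have he : (n : ℝ) - k + α = α := by rw [hkeq]; ring
      rw [he, hkeq]
      exact htop t ht
    | succ j ih =>
      intro k hk hnk t ht
      have hkn : k < n := by omega
      have ih' := ih (k + 1) (by omega) (by omega)
      have htpos : (0:ℝ) < t := lt_of_lt_of_le hb ht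
      set β : ℝ := (n : ℝ) - (k + 1) + α with hβdef
      have hβ : 0 ≤ β := by
        have : (k : ℝ) + 1 ≤ (n : ℝ) := by exact_mod_cast hkn
        simp only [hβdef]; linarith
      have hcast : ∀ x ∈ Set.Ici b, ‖iteratedDerivWithin (k+1) f (Set.Ici b) x‖ ≤ K * x ^ β := by
        intro x hx
        have := ih' x hx
        have : ((n : ℝ) - ((k:ℕ)+1:ℕ) + α) = β := by push_cast [hβdef]; ring
        rw [← this]
        exact_mod_cast ih' x hx
      -- mean value inequality on [b, t]
      set g := iteratedDerivWithin k f (Set.Ici b) with hg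
      have hdiff : DifferentiableOn ℝ g (Set.Ici b) :=
        hf.1.differentiableOn_iteratedDerivWithin (by exact_mod_cast hkn) (uniqueDiffOn_Ici b)
      have hmvt : ‖g t - g b‖ ≤ K * t ^ β * ‖t - b‖ := by
        refine Convex.norm_image_sub_le_of_norm_hasDerivWithin_le
          (f' := fun x => iteratedDerivWithin (k+1) f (Set.Ici b) x) ?_ ?_
          (convex_Icc b t) (Set.left_mem_Icc.mpr ht) (Set.right_mem_Icc.mpr ht)
        · intro x hx
          have hxb : x ∈ Set.Ici b := hx.1
          have h1 : HasDerivWithinAt g (derivWithin g (Set.Ici b) x) (Set.Ici b) x :=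
            (hdiff x hxb).hasDerivWithinAt
          have h2 : derivWithin g (Set.Ici b) x = iteratedDerivWithin (k+1) f (Set.Ici b) x :=
            (congrFun iteratedDerivWithin_succ x).symm
          show HasDerivWithinAt g (iteratedDerivWithin (k+1) f (Set.Ici b) x) (Set.Icc b t) x
          rw [← h2]
          exact h1.mono (Set.Icc_subset_Ici_self)
        · intro x hx
          refine le_trans (hcast x hx.1) ?_
          have hxpos : (0:ℝ) < x := lt_of_lt_of_le hb hx.1
          exact mul_le_mul_of_nonneg_left
            (Real.rpow_le_rpow hxpos.le hx.2 hβ) hK0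
      have hnorm : ‖t - b‖ = t - b := Real.norm_of_nonneg (by linarith [ht.out])
      rw [hnorm] at hmvt
      have hgt : ‖g t‖ ≤ ‖g b‖ + K * t ^ β * (t - b) := by
        calc ‖g t‖ = ‖g b + (g t - g b)‖ := by ring_nf
          _ ≤ ‖g b‖ + ‖g t - g b‖ := norm_add_le _ _
          _ ≤ ‖g b‖ + K * t ^ β * (t - b) := by linarith
      have hgb : ‖g b‖ ≤ K * b ^ ((n : ℝ) - k + α) := hatb k hkn
      have hβ1 : (n : ℝ) - k + α = β + 1 := by simp only [hβdef]; ring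
      have hbb : b ^ ((n : ℝ) - k + α) = b ^ β * b := by
        rw [hβ1, Real.rpow_add_one hb.ne']
      have htt : t ^ ((n : ℝ) - k + α) = t ^ β * t := by
        rw [hβ1, Real.rpow_add_one htpos.ne']
      have hmono : b ^ β ≤ t ^ β := Real.rpow_le_rpow hb.le ht.out hβ
      have htβ : (0:ℝ) < t ^ β := Real.rpow_pos_of_pos htpos β
      calc ‖g t‖ ≤ ‖g b‖ + K * t ^ β * (t - b) := hgt
        _ ≤ K * (b ^ β * b) + K * t ^ β * (t - b) := by rw [← hbb]; linarith
        _ ≤ K * (t ^ β * t) := by nlinarith [mul_le_mul_of_nonneg_left hmono hK0]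
        _ = K * t ^ ((n : ℝ) - k + α) := by rw [htt]
  intro k hk t ht
  exact main (n - k) k hk rfl t ht

/-- restriction to `[c,∞)` for `c ≥ b` stays in the space, with norm bound
`‖f|_{[c,∞)}‖ ≤ (n+1)·‖f‖`. -/
theorem stmt1 (b : ℝ) (hb : 0 < b) (n : ℕ) (α : ℝ) (hα : 0 ≤ α) (f : ℝ → ℂ)
    (hf : MemCnAlpha b n α f) (c : ℝ) (hc : b ≤ c) :
    MemCnAlpha c n α f ∧
      CnAlphaNorm c n α f ≤ ((n : ℝ) + 1) * CnAlphaNorm b n α f := by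
  obtain ⟨hcd, M, hM, hMb⟩ := hf
  have hf' : MemCnAlpha b n α f := ⟨hcd, M, hM, hMb⟩
  have hsub : Set.Ici c ⊆ Set.Ici b := Set.Ici_subset_Ici.mpr hc
  have hceq : ∀ {m : ℕ}, m ≤ n → ∀ {y : ℝ}, y ∈ Set.Ici c →
      iteratedDerivWithin m f (Set.Ici c) y = iteratedDerivWithin m f (Set.Ici b) y :=
    fun {m} hm {y} hy => iter_eq n f hcd hc hm hy
  have hc0 : (0:ℝ) < c := lt_of_lt_of_le hb hc
  set K := CnAlphaNorm b n α f with hK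
  have hK0 : 0 ≤ K := CnAlphaNorm_nonneg b hb n α f hf'
  have hkey := key_bound b hb n α hα f hf'
  constructor
  · refine ⟨hcd.mono hsub, M, hM, ?_⟩
    intro y hy
    rw [hceq le_rfl hy]
    exact hMb y (hsub hy)
  · -- norm bound
    have hsumle : (∑ k ∈ Finset.range n,
        ‖iteratedDerivWithin k f (Set.Ici c) c‖ / c ^ ((n : ℝ) - k + α)) ≤ n * K := by
      have : ∀ k ∈ Finset.range n,
          ‖iteratedDerivWithin k f (Set.Ici c) c‖ / c ^ ((n : ℝ) - k + α) ≤ K := by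
        intro k hk
        rw [hceq (Finset.mem_range.mp hk).le (Set.self_mem_Ici)]
        rw [div_le_iff₀ (Real.rpow_pos_of_pos hc0 _)]
        exact hkey k (Finset.mem_range.mp hk).le c (Set.mem_Ici.mpr hc)
      calc (∑ k ∈ Finset.range n,
            ‖iteratedDerivWithin k f (Set.Ici c) c‖ / c ^ ((n : ℝ) - k + α))
          ≤ ∑ _k ∈ Finset.range n, K := Finset.sum_le_sum this
        _ = n * K := by simp [mul_comm]
    have hsuple : (⨆ y : Set.Ici c,
        ‖iteratedDerivWithin n f (Set.Ici c) y‖ / (y : ℝ) ^ α) ≤ K := by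
      have : Nonempty (Set.Ici c) := ⟨⟨c, le_refl c⟩⟩
      refine ciSup_le ?_
      intro y
      rw [hceq le_rfl y.2]
      have hy0 : (0:ℝ) < (y : ℝ) := lt_of_lt_of_le hc0 y.2
      rw [div_le_iff₀ (Real.rpow_pos_of_pos hy0 _)]
      have := hkey n le_rfl y (hsub y.2)
      have he : (n : ℝ) - n + α = α := by ring
      rwa [he] at this
    unfold CnAlphaNorm
    have hring : ((n : ℝ) + 1) * K = (n : ℝ) * K + K := by ring
    linarith
end
end

section
/- Let b>0, n,m∈ℕ₀, and α,β≥0. If n≥m and β ≥ α+n−m, then C_α^n([b,∞)) ⊆ C_β^m([b,∞)), and for every f∈C_α^n([b,∞)) one has ‖f‖_{C_β^m([b,∞))} ≤ ((m+1)/b^{β−α−n+m}) · ‖f‖_{C_α^n([b,∞))}. -/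
open Set Filter MeasureTheory Topology

noncomputable section

namespace Stmt3Aux

variable {b : ℝ} {n : ℕ} {α : ℝ} {f : ℝ → ℂ}

lemma sum_nonneg' (hb : 0 < b) :
    0 ≤ ∑ k ∈ Finset.range n, ‖iteratedDerivWithin k f (Set.Ici b) b‖ / b ^ ((n : ℝ) - k + α) :=
  Finset.sum_nonneg fun k _ => div_nonneg (norm_nonneg _) (Real.rpow_nonneg hb.le _)

lemma sup_nonneg' (hb : 0 < b) :
    0 ≤ ⨆ y : Set.Ici b, ‖iteratedDerivWithin n f (Set.Ici b) y‖ / (y : ℝ) ^ α :=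
  Real.iSup_nonneg fun y => div_nonneg (norm_nonneg _) (Real.rpow_nonneg (hb.le.trans y.2) _)

lemma norm_nonneg' (hb : 0 < b) : 0 ≤ CnAlphaNorm b n α f :=
  add_nonneg (sum_nonneg' hb) (sup_nonneg' hb)

lemma bddAbove' (hb : 0 < b) (hf : MemCnAlpha b n α f) :
    BddAbove (Set.range fun y : Set.Ici b =>
      ‖iteratedDerivWithin n f (Set.Ici b) y‖ / (y : ℝ) ^ α) := by
  obtain ⟨M, hM0, hM⟩ := hf.2
  refine ⟨M, fun x hx => ?_⟩
  obtain ⟨y, rfl⟩ := hx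
  have hy : (0:ℝ) < (y:ℝ) ^ α := Real.rpow_pos_of_pos (hb.trans_le y.2) _
  rw [div_le_iff₀ hy]
  exact hM y y.2

lemma term_le (hb : 0 < b) (hf : MemCnAlpha b n α f) {k : ℕ} (hk : k ≤ n) :
    ‖iteratedDerivWithin k f (Set.Ici b) b‖ ≤ CnAlphaNorm b n α f * b ^ (α + (n : ℝ) - k) := by
  have hbe : (0:ℝ) < b ^ ((n : ℝ) - k + α) := Real.rpow_pos_of_pos hb _
  rcases eq_or_lt_of_le hk with rfl | hk
  · -- k = n : use the sup term
    have h1 : ‖iteratedDerivWithin k f (Set.Ici b) b‖ / (b:ℝ) ^ α ≤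
        ⨆ y : Set.Ici b, ‖iteratedDerivWithin k f (Set.Ici b) y‖ / (y : ℝ) ^ α :=
      le_ciSup (bddAbove' hb hf) (⟨b, le_refl b⟩ : Set.Ici b)
    have h2 : ‖iteratedDerivWithin k f (Set.Ici b) b‖ / (b:ℝ) ^ α ≤ CnAlphaNorm b k α f :=
      h1.trans (le_add_of_nonneg_left (sum_nonneg' hb))
    have hbp : (0:ℝ) < (b:ℝ) ^ α := Real.rpow_pos_of_pos hb _
    rw [div_le_iff₀ hbp] at h2
    calc ‖iteratedDerivWithin k f (Set.Ici b) b‖ ≤ CnAlphaNorm b k α f * b ^ α := h2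
    _ = CnAlphaNorm b k α f * b ^ (α + (k:ℝ) - k) := by ring_nf
  · -- k < n : it is one of the terms in the sum
    have h1 : ‖iteratedDerivWithin k f (Set.Ici b) b‖ / b ^ ((n : ℝ) - k + α) ≤
        ∑ j ∈ Finset.range n, ‖iteratedDerivWithin j f (Set.Ici b) b‖ / b ^ ((n : ℝ) - j + α) :=
      Finset.single_le_sum (f := fun j => ‖iteratedDerivWithin j f (Set.Ici b) b‖ /
        b ^ ((n : ℝ) - j + α))
        (fun j _ => div_nonneg (norm_nonneg _) (Real.rpow_nonneg hb.le _))
        (Finset.mem_range.2 hk)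
    have h2 : ‖iteratedDerivWithin k f (Set.Ici b) b‖ / b ^ ((n : ℝ) - k + α) ≤
        CnAlphaNorm b n α f := h1.trans (le_add_of_nonneg_right (sup_nonneg' hb))
    rw [div_le_iff₀ hbe] at h2
    have : (n : ℝ) - k + α = α + (n : ℝ) - k := by ring
    rwa [this] at h2

/-- The key pointwise estimate: `‖f^{(k)}(y)‖ ≤ ‖f‖ · y^{α+n-k}` for all `k ≤ n`, `y ≥ b`. -/
lemma key (hb : 0 < b) (hα : 0 ≤ α) (hf : MemCnAlpha b n α f) :
    ∀ j k : ℕ, k + j = n → ∀ y ∈ Set.Ici b,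
      ‖iteratedDerivWithin k f (Set.Ici b) y‖ ≤ CnAlphaNorm b n α f * y ^ (α + (j : ℝ)) := by
  have hA : 0 ≤ CnAlphaNorm b n α f := norm_nonneg' hb
  intro j
  induction j with
  | zero =>
    intro k hk y hy
    have hk' : k = n := by omega
    subst hk'
    have hyp : (0:ℝ) < (y:ℝ) ^ α := Real.rpow_pos_of_pos (hb.trans_le hy) _
    have h1 : ‖iteratedDerivWithin k f (Set.Ici b) y‖ / (y:ℝ) ^ α ≤ CnAlphaNorm b k α f :=
      (le_ciSup (bddAbove' hb hf) (⟨y, hy⟩ : Set.Ici b)).trans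
        (le_add_of_nonneg_left (sum_nonneg' hb))
    rw [div_le_iff₀ hyp] at h1
    simpa using h1
  | succ j ih =>
    intro k hk y hy
    have hkn : k + 1 + j = n := by omega
    have hkltn : k < n := by omega
    set A := CnAlphaNorm b n α f with hAdef
    set p : ℝ := α + (j : ℝ) + 1 with hp
    have hp1 : (1:ℝ) ≤ p := by
      have hj : (0:ℝ) ≤ (j:ℝ) := Nat.cast_nonneg j
      rw [hp]; linarith
    have hud : UniqueDiffOn ℝ (Set.Ici b) := uniqueDiffOn_Ici b
    have hdiff : DifferentiableOn ℝ (iteratedDerivWithin k f (Set.Ici b)) (Set.Ici b) :=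
      hf.1.differentiableOn_iteratedDerivWithin (by exact_mod_cast hkltn) hud
    -- apply the fencing theorem on [b, y] with B t = A * t ^ p
    have main : ∀ ⦃x⦄, x ∈ Set.Icc b y →
        ‖iteratedDerivWithin k f (Set.Ici b) x‖ ≤ A * x ^ p := by
      apply image_norm_le_of_norm_deriv_right_le_deriv_boundary'
        (f' := fun t => iteratedDerivWithin (k + 1) f (Set.Ici b) t)
        (B := fun t => A * t ^ p) (B' := fun t => A * (p * t ^ (p - 1)))
      · exact (hdiff.continuousOn).mono (Set.Icc_subset_Ici_self)
      · intro x hx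
        have hx' : x ∈ Set.Ici b := hx.1
        have h1 : HasDerivWithinAt (iteratedDerivWithin k f (Set.Ici b))
            (derivWithin (iteratedDerivWithin k f (Set.Ici b)) (Set.Ici b) x) (Set.Ici b) x :=
          (hdiff x hx').hasDerivWithinAt
        rw [← iteratedDerivWithin_succ] at h1
        exact h1.mono (Set.Ici_subset_Ici.2 hx.1)
      · have := term_le hb hf hkltn.le
        have he : α + (n : ℝ) - k = p := by
          rw [hp]; push_cast [← hkn]; ring
        rwa [he] at this
      · intro x hx
        have hx0 : x ≠ 0 := by
          have : 0 < x := hb.trans_le hx.1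
          exact this.ne'
        exact (((Real.hasDerivAt_rpow_const (p := p) (Or.inl hx0)).const_mul
          A).continuousAt.continuousWithinAt)
      · intro x hx
        have hx0 : x ≠ 0 := (hb.trans_le hx.1).ne'
        exact ((Real.hasDerivAt_rpow_const (p := p) (Or.inl hx0)).const_mul A).hasDerivWithinAt
      · intro x hx
        have hx' : x ∈ Set.Ici b := hx.1
        have h1 := ih (k + 1) hkn x hx'
        have he : p - 1 = α + (j : ℝ) := by rw [hp]; ring
        rw [he]
        calc ‖iteratedDerivWithin (k + 1) f (Set.Ici b) x‖ ≤ A * x ^ (α + (j:ℝ)) := h1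
        _ ≤ p * (A * x ^ (α + (j:ℝ))) := le_mul_of_one_le_left
            (mul_nonneg hA (Real.rpow_nonneg (hb.trans_le hx').le _)) hp1
        _ = A * (p * x ^ (α + (j:ℝ))) := by ring
    have := main (Set.right_mem_Icc.2 hy)
    have he : p = α + ((j:ℕ) + 1 : ℕ) := by push_cast [hp]; ring
    have he2 : α + ((j + 1 : ℕ) : ℝ) = p := by push_cast [hp]; ring
    rwa [he2]

end Stmt3Aux

/-- if `n ≥ m` and `β ≥ α + n - m`, then `C_α^n([b,∞)) ⊆ C_β^m([b,∞))` with
`‖f‖_{C_β^m} ≤ ((m+1)/b^{β-α-n+m})·‖f‖_{C_α^n}`. -/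
theorem stmt3 (b : ℝ) (hb : 0 < b) (n m : ℕ) (α β : ℝ) (hα : 0 ≤ α) (hβ0 : 0 ≤ β)
    (hnm : m ≤ n) (hβ : α + (n : ℝ) - m ≤ β) (f : ℝ → ℂ) (hf : MemCnAlpha b n α f) :
    MemCnAlpha b m β f ∧
      CnAlphaNorm b m β f ≤ ((m : ℝ) + 1) / b ^ (β - α - (n : ℝ) + m) * CnAlphaNorm b n α f := by
  classical
  set A := CnAlphaNorm b n α f with hAdef
  have hA : 0 ≤ A := Stmt3Aux.norm_nonneg' hb
  -- key estimate for the m-th derivative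
  have hkey : ∀ y ∈ Set.Ici b,
      ‖iteratedDerivWithin m f (Set.Ici b) y‖ ≤ A * y ^ (α + ((n - m : ℕ) : ℝ)) :=
    Stmt3Aux.key hb hα hf (n - m) m (by omega)
  have he : α + ((n - m : ℕ) : ℝ) = α + (n:ℝ) - m := by
    have : ((n - m : ℕ) : ℝ) = (n:ℝ) - m := by push_cast [Nat.cast_sub hnm]; ring
    rw [this]; ring
  rw [he] at hkey
  have hexp : α + (n:ℝ) - m - β ≤ 0 := by linarith
  -- pointwise bound against y^β
  have hbd : ∀ y ∈ Set.Ici b, ‖iteratedDerivWithin m f (Set.Ici b) y‖ ≤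
      (A * b ^ (α + (n:ℝ) - m - β)) * y ^ β := by
    intro y hy
    have hy0 : 0 < y := hb.trans_le hy
    have h1 := hkey y hy
    have h2 : y ^ (α + (n:ℝ) - m) = y ^ (α + (n:ℝ) - m - β) * y ^ β := by
      rw [← Real.rpow_add hy0]; ring_nf
    have h3 : y ^ (α + (n:ℝ) - m - β) ≤ b ^ (α + (n:ℝ) - m - β) :=
      Real.rpow_le_rpow_of_nonpos hb hy hexp
    calc ‖iteratedDerivWithin m f (Set.Ici b) y‖ ≤ A * y ^ (α + (n:ℝ) - m) := h1
    _ = A * (y ^ (α + (n:ℝ) - m - β) * y ^ β) := by rw [h2]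
    _ ≤ A * (b ^ (α + (n:ℝ) - m - β) * y ^ β) := by
        apply mul_le_mul_of_nonneg_left _ hA
        exact mul_le_mul_of_nonneg_right h3 (Real.rpow_nonneg hy0.le _)
    _ = (A * b ^ (α + (n:ℝ) - m - β)) * y ^ β := by ring
  have hmem : MemCnAlpha b m β f := by
    refine ⟨hf.1.of_le (by exact_mod_cast hnm), A * b ^ (α + (n:ℝ) - m - β),
      mul_nonneg hA (Real.rpow_nonneg hb.le _), hbd⟩
  refine ⟨hmem, ?_⟩
  set c : ℝ := b ^ (β - α - (n:ℝ) + m) with hc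
  have hcpos : 0 < c := Real.rpow_pos_of_pos hb _
  have hcinv : b ^ (α + (n:ℝ) - m - β) = 1 / c := by
    rw [hc, eq_div_iff (Real.rpow_pos_of_pos hb _).ne', ← Real.rpow_add hb,
      show α + (n:ℝ) - m - β + (β - α - (n:ℝ) + m) = 0 by ring, Real.rpow_zero]
  -- bound the sum part
  have hsum : (∑ k ∈ Finset.range m,
      ‖iteratedDerivWithin k f (Set.Ici b) b‖ / b ^ ((m : ℝ) - k + β)) ≤ (m : ℝ) * (A / c) := by
    have hterm : ∀ k ∈ Finset.range m,
        ‖iteratedDerivWithin k f (Set.Ici b) b‖ / b ^ ((m : ℝ) - k + β) ≤ A / c := by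
      intro k hk
      have hkm : k < m := Finset.mem_range.1 hk
      have h1 : ‖iteratedDerivWithin k f (Set.Ici b) b‖ ≤ A * b ^ (α + (n:ℝ) - k) :=
        Stmt3Aux.term_le hb hf (hkm.le.trans hnm)
      have hbe : (0:ℝ) < b ^ ((m : ℝ) - k + β) := Real.rpow_pos_of_pos hb _
      rw [div_le_div_iff₀ hbe hcpos]
      calc ‖iteratedDerivWithin k f (Set.Ici b) b‖ * c ≤ (A * b ^ (α + (n:ℝ) - k)) * c :=
        mul_le_mul_of_nonneg_right h1 hcpos.le
      _ = A * b ^ ((m:ℝ) - k + β) := by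
          rw [hc, mul_assoc, ← Real.rpow_add hb,
            show α + (n:ℝ) - k + (β - α - (n:ℝ) + m) = (m:ℝ) - k + β by ring]
    calc (∑ k ∈ Finset.range m,
        ‖iteratedDerivWithin k f (Set.Ici b) b‖ / b ^ ((m : ℝ) - k + β)) ≤
        ∑ _k ∈ Finset.range m, A / c := Finset.sum_le_sum hterm
    _ = (m : ℝ) * (A / c) := by simp [mul_comm]
  -- bound the sup part
  have hsup : (⨆ y : Set.Ici b, ‖iteratedDerivWithin m f (Set.Ici b) y‖ / (y : ℝ) ^ β) ≤
      A / c := by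
    apply Real.iSup_le _ (div_nonneg hA hcpos.le)
    intro y
    have hy0 : 0 < (y:ℝ) := hb.trans_le y.2
    have hyp : (0:ℝ) < (y:ℝ) ^ β := Real.rpow_pos_of_pos hy0 _
    rw [div_le_iff₀ hyp]
    have := hbd y y.2
    rw [hcinv] at this
    calc ‖iteratedDerivWithin m f (Set.Ici b) y‖ ≤ (A * (1/c)) * (y:ℝ) ^ β := this
    _ = A / c * (y:ℝ) ^ β := by ring
  calc CnAlphaNorm b m β f ≤ (m : ℝ) * (A / c) + A / c := add_le_add hsum hsup
  _ = ((m : ℝ) + 1) / c * A := by ring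
  _ = ((m : ℝ) + 1) / b ^ (β - α - (n:ℝ) + m) * A := by rw [hc]
end
end

section
/- Let b>0, n∈ℕ₀, α≥0, and f∈C_α^n([b,∞)). Then for every p≥0 the function y ↦ y^p f(y) belongs to C_{α+p}^n([b,∞)) and ‖y^p f‖_{C_{α+p}^n([b,∞))} ≤ (p+n+1)^n · ‖f‖_{C_α^n([b,∞))}. -/
open Set Filter MeasureTheory Topology

noncomputable section

private lemma ofReal_rpow_iter {b p : ℝ} (hb : 0 < b) (k : ℕ) :
    ∀ y ∈ Set.Ici b, iteratedDerivWithin k (fun y : ℝ => ((y ^ p : ℝ) : ℂ)) (Set.Ici b) y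
      = (((∏ i ∈ Finset.range k, (p - i)) * y ^ (p - k) : ℝ) : ℂ) := by
  induction k with
  | zero => intro y hy; simp
  | succ k ih =>
    intro y hy
    have hy0 : (0:ℝ) < y := lt_of_lt_of_le hb hy
    rw [iteratedDerivWithin_succ]
    rw [derivWithin_congr (fun z hz => ih z hz) (ih y hy)]
    have hd : HasDerivAt (fun y : ℝ => (((∏ i ∈ Finset.range k, (p - i)) * y ^ (p - k) : ℝ) : ℂ))
        (((∏ i ∈ Finset.range k, (p - i)) * ((p - k) * y ^ (p - k - 1)) : ℝ) : ℂ) y :=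
      ((Real.hasDerivAt_rpow_const (p := p - k) (Or.inl hy0.ne')).const_mul _).ofReal_comp
    rw [hd.hasDerivWithinAt.derivWithin (uniqueDiffOn_Ici b y hy)]
    have he : p - ((k : ℕ) + 1 : ℕ) = p - k - 1 := by push_cast; ring
    rw [Finset.prod_range_succ]
    exact congrArg Complex.ofReal (by rw [he]; push_cast; ring)

private lemma phi_contDiffOn {b p : ℝ} (hb : 0 < b) (n : ℕ) :
    ContDiffOn ℝ n (fun y : ℝ => ((y ^ p : ℝ) : ℂ)) (Set.Ici b) := by
  apply Complex.ofRealCLM.contDiff.comp_contDiffOn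
  intro y hy
  exact (Real.contDiffAt_rpow_const_of_ne (ne_of_gt (lt_of_lt_of_le hb hy))).contDiffWithinAt

private lemma phi_bound {b p : ℝ} (hb : 0 < b) (hp : 0 ≤ p) {k n : ℕ} (hk : k ≤ n) :
    ∀ y ∈ Set.Ici b, ‖iteratedDerivWithin k (fun y : ℝ => ((y ^ p : ℝ) : ℂ)) (Set.Ici b) y‖
      ≤ (p + n) ^ k * y ^ (p - k) := by
  intro y hy
  rw [ofReal_rpow_iter hb k y hy, Complex.norm_real, Real.norm_eq_abs, abs_mul,
    abs_of_pos (Real.rpow_pos_of_pos (hb.trans_le hy) _)]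
  have : |∏ i ∈ Finset.range k, (p - i)| ≤ (p + n) ^ k := by
    rw [Finset.abs_prod]
    calc ∏ i ∈ Finset.range k, |p - (i:ℝ)| ≤ ∏ i ∈ Finset.range k, (p + n) := by
          apply Finset.prod_le_prod (fun i _ => abs_nonneg _)
          intro i hi
          have hi' : (i:ℝ) ≤ n := by
            have : i < k := Finset.mem_range.1 hi
            exact_mod_cast le_trans (le_of_lt this) hk
          have hn0 : (0:ℝ) ≤ n := Nat.cast_nonneg n
          rw [abs_le]
          have hi0 : (0:ℝ) ≤ i := Nat.cast_nonneg i
          constructor <;> linarith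
      _ = (p + n) ^ k := by rw [Finset.prod_const, Finset.card_range]
  exact mul_le_mul_of_nonneg_right this (le_of_lt (Real.rpow_pos_of_pos (hb.trans_le hy) _))

private lemma growth {b α : ℝ} (hb : 0 < b) (hα : 0 ≤ α) {n : ℕ} {f : ℝ → ℂ}
    (hf : ContDiffOn ℝ n f (Set.Ici b)) {N : ℝ} (hN0 : 0 ≤ N)
    (hN : ∀ y ∈ Set.Ici b, ‖iteratedDerivWithin n f (Set.Ici b) y‖ ≤ N * y ^ α) :
    ∀ j, j ≤ n → ∀ y ∈ Set.Ici b, ‖iteratedDerivWithin (n - j) f (Set.Ici b) y‖ ≤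
      (N + ∑ m ∈ Finset.Ico (n - j) n,
        ‖iteratedDerivWithin m f (Set.Ici b) b‖ / b ^ ((n:ℝ) - m + α)) * y ^ (α + j) := by
  intro j
  induction j with
  | zero =>
    intro _ y hy
    simpa using hN y hy
  | succ j ih =>
    intro hj y hy
    have hjn : j ≤ n := le_of_lt (Nat.lt_of_succ_le hj)
    have hy0 : (0:ℝ) < y := lt_of_lt_of_le hb hy
    have hby : b ≤ y := hy
    have hαj : (0:ℝ) ≤ α + j := by positivity
    have hC0 : (0:ℝ) ≤ N + ∑ m ∈ Finset.Ico (n - j) n,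
        ‖iteratedDerivWithin m f (Set.Ici b) b‖ / b ^ ((n:ℝ) - m + α) := by
      apply add_nonneg hN0
      exact Finset.sum_nonneg fun m _ =>
        div_nonneg (norm_nonneg _) (le_of_lt (Real.rpow_pos_of_pos hb _))
    have hk1 : (n - (j + 1)) + 1 = n - j := by omega
    have hkn : n - (j + 1) < n := by omega
    -- the derivative ladder
    have hlad : ∀ t ∈ Set.Ici b, HasDerivWithinAt (iteratedDerivWithin (n - (j+1)) f (Set.Ici b))
        (iteratedDerivWithin (n - j) f (Set.Ici b) t) (Set.Ici b) t := by
      intro t ht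
      have hd := (hf.differentiableOn_iteratedDerivWithin
        (m := n - (j+1)) (by exact_mod_cast hkn) (uniqueDiffOn_Ici b) t ht).hasDerivWithinAt
      rw [← iteratedDerivWithin_succ, hk1] at hd
      exact hd
    -- mean value on Icc b y
    have hmv : ‖iteratedDerivWithin (n - (j+1)) f (Set.Ici b) y
          - iteratedDerivWithin (n - (j+1)) f (Set.Ici b) b‖
        ≤ ((N + ∑ m ∈ Finset.Ico (n - j) n,
            ‖iteratedDerivWithin m f (Set.Ici b) b‖ / b ^ ((n:ℝ) - m + α)) * y ^ (α + j))
          * ‖y - b‖ := by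
      apply Convex.norm_image_sub_le_of_norm_hasDerivWithin_le (s := Set.Icc b y)
        (f' := fun t => iteratedDerivWithin (n - j) f (Set.Ici b) t)
        (fun t ht => (hlad t (Set.Icc_subset_Ici_self ht)).mono Set.Icc_subset_Ici_self)
        ?_ (convex_Icc b y) (Set.left_mem_Icc.2 hby) (Set.right_mem_Icc.2 hby)
      intro t ht
      have ht' : t ∈ Set.Ici b := Set.Icc_subset_Ici_self ht
      have ht0 : (0:ℝ) ≤ t := le_trans hb.le ht.1
      calc ‖iteratedDerivWithin (n - j) f (Set.Ici b) t‖
          ≤ (N + ∑ m ∈ Finset.Ico (n - j) n,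
            ‖iteratedDerivWithin m f (Set.Ici b) b‖ / b ^ ((n:ℝ) - m + α)) * t ^ (α + j) :=
            ih hjn t ht'
        _ ≤ _ := mul_le_mul_of_nonneg_left (Real.rpow_le_rpow ht0 ht.2 hαj) hC0
    have hnormb : ‖iteratedDerivWithin (n - (j+1)) f (Set.Ici b) b‖
        = (‖iteratedDerivWithin (n - (j+1)) f (Set.Ici b) b‖ / b ^ ((n:ℝ) - (n - (j+1) : ℕ) + α))
          * b ^ (α + ((j:ℝ) + 1)) := by
      have hcast : (n:ℝ) - ((n - (j+1) : ℕ) : ℝ) + α = α + ((j:ℝ) + 1) := by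
        have : ((n - (j+1) : ℕ) : ℝ) = (n:ℝ) - (j+1) := by
          have := Nat.cast_sub hj (R := ℝ); push_cast at this ⊢; linarith
        rw [this]; ring
      rw [hcast, div_mul_cancel₀]
      exact (Real.rpow_pos_of_pos hb _).ne'
    -- assemble
    have key : ‖iteratedDerivWithin (n - (j+1)) f (Set.Ici b) y‖
        ≤ ((‖iteratedDerivWithin (n - (j+1)) f (Set.Ici b) b‖
              / b ^ ((n:ℝ) - (n - (j+1) : ℕ) + α))
           + (N + ∑ m ∈ Finset.Ico (n - j) n,
            ‖iteratedDerivWithin m f (Set.Ici b) b‖ / b ^ ((n:ℝ) - m + α))) * y ^ (α + (j+1)) := by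
      have h1 : ‖iteratedDerivWithin (n - (j+1)) f (Set.Ici b) y‖
          ≤ ‖iteratedDerivWithin (n - (j+1)) f (Set.Ici b) b‖
            + ‖iteratedDerivWithin (n - (j+1)) f (Set.Ici b) y
                - iteratedDerivWithin (n - (j+1)) f (Set.Ici b) b‖ := by
        have := norm_add_le (iteratedDerivWithin (n - (j+1)) f (Set.Ici b) b)
          (iteratedDerivWithin (n - (j+1)) f (Set.Ici b) y
            - iteratedDerivWithin (n - (j+1)) f (Set.Ici b) b)
        rwa [add_sub_cancel] at this
      have hyy : y ^ (α + ((j:ℝ)+1)) = y ^ (α + (j:ℝ)) * y := by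
        rw [← Real.rpow_add_one hy0.ne' (α + j)]; ring_nf
      have hyb : ‖y - b‖ ≤ y := by
        rw [Real.norm_eq_abs, abs_of_nonneg (by linarith)]; linarith
      have h2 : ‖iteratedDerivWithin (n - (j+1)) f (Set.Ici b) b‖
          ≤ (‖iteratedDerivWithin (n - (j+1)) f (Set.Ici b) b‖
              / b ^ ((n:ℝ) - (n - (j+1) : ℕ) + α)) * y ^ (α + ((j:ℝ) + 1)) := by
        nth_rewrite 1 [hnormb]
        apply mul_le_mul_of_nonneg_left (Real.rpow_le_rpow hb.le hby (by positivity))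
        exact div_nonneg (norm_nonneg _) (le_of_lt (Real.rpow_pos_of_pos hb _))
      have h3 : ((N + ∑ m ∈ Finset.Ico (n - j) n,
            ‖iteratedDerivWithin m f (Set.Ici b) b‖ / b ^ ((n:ℝ) - m + α)) * y ^ (α + j))
          * ‖y - b‖
          ≤ (N + ∑ m ∈ Finset.Ico (n - j) n,
            ‖iteratedDerivWithin m f (Set.Ici b) b‖ / b ^ ((n:ℝ) - m + α))
            * y ^ (α + ((j:ℝ)+1)) := by
        rw [hyy, mul_assoc]
        apply mul_le_mul_of_nonneg_left _ hC0
        exact mul_le_mul_of_nonneg_left hyb (le_of_lt (Real.rpow_pos_of_pos hy0 _))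
      push_cast
      push_cast at h2 h3
      calc ‖iteratedDerivWithin (n - (j+1)) f (Set.Ici b) y‖
          ≤ ‖iteratedDerivWithin (n - (j+1)) f (Set.Ici b) b‖
            + ‖iteratedDerivWithin (n - (j+1)) f (Set.Ici b) y
                - iteratedDerivWithin (n - (j+1)) f (Set.Ici b) b‖ := h1
        _ ≤ (‖iteratedDerivWithin (n - (j+1)) f (Set.Ici b) b‖
              / b ^ ((n:ℝ) - ((n - (j+1) : ℕ) : ℝ) + α)) * y ^ (α + ((j:ℝ) + 1))
            + (N + ∑ m ∈ Finset.Ico (n - j) n,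
            ‖iteratedDerivWithin m f (Set.Ici b) b‖ / b ^ ((n:ℝ) - m + α))
            * y ^ (α + ((j:ℝ)+1)) := add_le_add h2 (le_trans hmv h3)
        _ = _ := by ring
    -- rewrite the Ico sum
    have hsum : ∑ m ∈ Finset.Ico (n - (j+1)) n,
        ‖iteratedDerivWithin m f (Set.Ici b) b‖ / b ^ ((n:ℝ) - m + α)
        = ‖iteratedDerivWithin (n - (j+1)) f (Set.Ici b) b‖
            / b ^ ((n:ℝ) - (n - (j+1) : ℕ) + α)
          + ∑ m ∈ Finset.Ico (n - j) n,
            ‖iteratedDerivWithin m f (Set.Ici b) b‖ / b ^ ((n:ℝ) - m + α) := by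
      rw [Finset.sum_eq_sum_Ico_succ_bot hkn, hk1]
    rw [hsum]
    calc ‖iteratedDerivWithin (n - (j+1)) f (Set.Ici b) y‖ ≤ _ := key
      _ = _ := by push_cast; ring

private lemma final_comb {x Nf : ℝ} (hx : 0 ≤ x) (hN : 0 ≤ Nf) {n : ℕ} (S : ℕ → ℝ)
    (hS : ∀ m, 0 ≤ S m) :
    (∑ k ∈ Finset.range n, ∑ j ∈ Finset.range (k + 1), (k.choose j : ℝ) * x ^ j * S (k - j))
      + ∑ i ∈ Finset.range (n + 1), (n.choose i : ℝ) * x ^ i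
          * (Nf + ∑ m ∈ Finset.Ico (n - i) n, S m)
    ≤ (x + 1) ^ n * (∑ m ∈ Finset.range n, S m + Nf) := by
  have hpow : (x + 1) ^ n = ∑ i ∈ Finset.range (n + 1), (n.choose i : ℝ) * x ^ i := by
    rw [add_pow]
    exact Finset.sum_congr rfl fun i _ => by ring
  rw [hpow, Finset.sum_mul]
  have hsplit : ∀ i ∈ Finset.range (n + 1),
      (n.choose i : ℝ) * x ^ i * (∑ m ∈ Finset.range n, S m + Nf)
      = (n.choose i : ℝ) * x ^ i * (∑ m ∈ Finset.range (n - i), S m)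
        + (n.choose i : ℝ) * x ^ i * (Nf + ∑ m ∈ Finset.Ico (n - i) n, S m) := by
    intro i _
    rw [← Finset.sum_range_add_sum_Ico S (Nat.sub_le n i)]
    ring
  rw [Finset.sum_congr rfl hsplit, Finset.sum_add_distrib]
  apply add_le_add_left
  -- the triangle sum comparison
  have htri : (∑ k ∈ Finset.range n, ∑ j ∈ Finset.range (k + 1),
      (k.choose j : ℝ) * x ^ j * S (k - j))
      = ∑ i ∈ Finset.range n, ∑ m ∈ Finset.range (n - i), ((i + m).choose i : ℝ) * x ^ i * S m := by
    have h1 := Finset.sum_Ico_Ico_comm 0 n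
      (fun i k => ((k.choose i : ℝ) * x ^ i * S (k - i)))
    simp only [← Finset.range_eq_Ico] at h1
    rw [← h1]
    apply Finset.sum_congr rfl
    intro i hi
    rw [Finset.sum_Ico_eq_sum_range]
    apply Finset.sum_congr rfl
    intro m hm
    congr 2
    omega
  rw [htri, Finset.sum_range_succ]
  have hlast : (0:ℝ) ≤ (n.choose n : ℝ) * x ^ n * ∑ m ∈ Finset.range (n - n), S m := by
    simp
  refine le_trans ?_ (le_add_of_nonneg_right hlast)
  apply Finset.sum_le_sum
  intro i hi
  have hin : i < n := Finset.mem_range.1 hi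
  rw [Finset.mul_sum]
  apply Finset.sum_le_sum
  intro m hm
  have hmn : i + m ≤ n := by
    have := Finset.mem_range.1 hm; omega
  have hch : ((i + m).choose i : ℝ) ≤ (n.choose i : ℝ) := by
    exact_mod_cast Nat.choose_le_choose i hmn
  calc ((i + m).choose i : ℝ) * x ^ i * S m
      ≤ (n.choose i : ℝ) * x ^ i * S m := by
        apply mul_le_mul_of_nonneg_right _ (hS m)
        exact mul_le_mul_of_nonneg_right hch (by positivity)
    _ = (n.choose i : ℝ) * x ^ i * S m := rfl

/-- for `p ≥ 0`, the function `y ↦ y^p·f(y)` belongs to `C_{α+p}^n([b,∞))` with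
`‖y^p f‖ ≤ (p+n+1)^n·‖f‖`. -/
theorem stmt4 (b : ℝ) (hb : 0 < b) (n : ℕ) (α : ℝ) (hα : 0 ≤ α) (f : ℝ → ℂ)
    (hf : MemCnAlpha b n α f) (p : ℝ) (hp : 0 ≤ p) :
    MemCnAlpha b n (α + p) (fun y => (↑(y ^ p) : ℂ) * f y) ∧
      CnAlphaNorm b n (α + p) (fun y => (↑(y ^ p) : ℂ) * f y) ≤
        (p + n + 1) ^ n * CnAlphaNorm b n α f := by
  obtain ⟨hreg, M, hM0, hM⟩ := hf
  have huset : UniqueDiffOn ℝ (Set.Ici b) := uniqueDiffOn_Ici b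
  have hbs : b ∈ Set.Ici b := Set.self_mem_Ici
  haveI : Nonempty ↥(Set.Ici b) := ⟨⟨b, hbs⟩⟩
  have hx0 : (0:ℝ) ≤ p + n := add_nonneg hp (Nat.cast_nonneg n)
  -- the sup part of the norm of f
  have hbdd : BddAbove (Set.range fun y : Set.Ici b =>
      ‖iteratedDerivWithin n f (Set.Ici b) y‖ / (y : ℝ) ^ α) := by
    refine ⟨M, ?_⟩
    rintro _ ⟨⟨y, hy⟩, rfl⟩
    have hy0 : (0:ℝ) < y := lt_of_lt_of_le hb hy
    exact (div_le_iff₀ (Real.rpow_pos_of_pos hy0 α)).2 (hM y hy)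
  set Nf : ℝ := ⨆ y : Set.Ici b, ‖iteratedDerivWithin n f (Set.Ici b) y‖ / (y : ℝ) ^ α with hNf
  have hNle : ∀ y ∈ Set.Ici b, ‖iteratedDerivWithin n f (Set.Ici b) y‖ ≤ Nf * y ^ α := by
    intro y hy
    have h := le_ciSup hbdd (⟨y, hy⟩ : Set.Ici b)
    exact (div_le_iff₀ (Real.rpow_pos_of_pos (lt_of_lt_of_le hb hy) α)).1 h
  have hNf0 : 0 ≤ Nf :=
    le_trans (div_nonneg (norm_nonneg _) (le_of_lt (Real.rpow_pos_of_pos hb α)))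
      (le_ciSup hbdd (⟨b, hbs⟩ : Set.Ici b))
  have hgrow := growth hb hα hreg hNf0 hNle
  have hS0 : ∀ m : ℕ, 0 ≤ ‖iteratedDerivWithin m f (Set.Ici b) b‖ / b ^ ((n:ℝ) - m + α) :=
    fun m => div_nonneg (norm_nonneg _) (le_of_lt (Real.rpow_pos_of_pos hb _))
  have hC0 : ∀ i : ℕ, 0 ≤ Nf + ∑ m ∈ Finset.Ico (n - i) n,
      ‖iteratedDerivWithin m f (Set.Ici b) b‖ / b ^ ((n:ℝ) - m + α) :=
    fun i => add_nonneg hNf0 (Finset.sum_nonneg fun m _ => hS0 m)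
  -- Leibniz-type norm bound
  have hleib : ∀ k : ℕ, k ≤ n → ∀ y ∈ Set.Ici b,
      ‖iteratedDerivWithin k (fun y : ℝ => ((y ^ p : ℝ) : ℂ) * f y) (Set.Ici b) y‖ ≤
        ∑ i ∈ Finset.range (k + 1), (k.choose i : ℝ)
          * ‖iteratedDerivWithin i (fun y : ℝ => ((y ^ p : ℝ) : ℂ)) (Set.Ici b) y‖
          * ‖iteratedDerivWithin (k - i) f (Set.Ici b) y‖ := by
    intro k hk y hy
    rw [← norm_iteratedFDerivWithin_eq_norm_iteratedDerivWithin]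
    refine le_trans (norm_iteratedFDerivWithin_mul_le (phi_contDiffOn hb n) hreg huset hy
      (by exact_mod_cast hk)) ?_
    apply le_of_eq
    apply Finset.sum_congr rfl
    intro i _
    rw [norm_iteratedFDerivWithin_eq_norm_iteratedDerivWithin,
      norm_iteratedFDerivWithin_eq_norm_iteratedDerivWithin]
  -- pointwise bound for the n-th derivative of the product
  have hgb : ∀ y ∈ Set.Ici b,
      ‖iteratedDerivWithin n (fun y : ℝ => ((y ^ p : ℝ) : ℂ) * f y) (Set.Ici b) y‖ ≤
        (∑ i ∈ Finset.range (n + 1), (n.choose i : ℝ) * (p + n) ^ i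
          * (Nf + ∑ m ∈ Finset.Ico (n - i) n,
            ‖iteratedDerivWithin m f (Set.Ici b) b‖ / b ^ ((n:ℝ) - m + α))) * y ^ (α + p) := by
    intro y hy
    have hy0 : (0:ℝ) < y := lt_of_lt_of_le hb hy
    refine le_trans (hleib n le_rfl y hy) ?_
    rw [Finset.sum_mul]
    apply Finset.sum_le_sum
    intro i hi
    have hin : i ≤ n := Nat.lt_succ_iff.1 (Finset.mem_range.1 hi)
    have h2 := phi_bound hb hp hin y hy
    have h3 := hgrow i hin y hy
    have hyy : y ^ (p - (i:ℝ)) * y ^ (α + i) = y ^ (α + p) := by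
      rw [← Real.rpow_add hy0]; congr 1; ring
    calc (n.choose i : ℝ)
          * ‖iteratedDerivWithin i (fun y : ℝ => ((y ^ p : ℝ) : ℂ)) (Set.Ici b) y‖
          * ‖iteratedDerivWithin (n - i) f (Set.Ici b) y‖
        ≤ (n.choose i : ℝ) * ((p + n) ^ i * y ^ (p - (i:ℝ)))
          * ((Nf + ∑ m ∈ Finset.Ico (n - i) n,
            ‖iteratedDerivWithin m f (Set.Ici b) b‖ / b ^ ((n:ℝ) - m + α)) * y ^ (α + i)) := by
          apply mul_le_mul (mul_le_mul_of_nonneg_left h2 (Nat.cast_nonneg _)) h3 (norm_nonneg _)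
          have : (0:ℝ) ≤ y ^ (p - (i:ℝ)) := le_of_lt (Real.rpow_pos_of_pos hy0 _)
          positivity
      _ = (n.choose i : ℝ) * (p + n) ^ i
          * (Nf + ∑ m ∈ Finset.Ico (n - i) n,
            ‖iteratedDerivWithin m f (Set.Ici b) b‖ / b ^ ((n:ℝ) - m + α))
          * (y ^ (p - (i:ℝ)) * y ^ (α + i)) := by ring
      _ = _ := by rw [hyy]
  have hM'0 : 0 ≤ ∑ i ∈ Finset.range (n + 1), (n.choose i : ℝ) * (p + n) ^ i
          * (Nf + ∑ m ∈ Finset.Ico (n - i) n,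
            ‖iteratedDerivWithin m f (Set.Ici b) b‖ / b ^ ((n:ℝ) - m + α)) := by
    apply Finset.sum_nonneg
    intro i _
    have := hC0 i
    positivity
  constructor
  · exact ⟨(phi_contDiffOn hb n).mul hreg, _, hM'0, hgb⟩
  -- the norm inequality
  · have hbound : ∀ k, k < n →
        ‖iteratedDerivWithin k (fun y : ℝ => ((y ^ p : ℝ) : ℂ) * f y) (Set.Ici b) b‖
          / b ^ ((n:ℝ) - k + (α + p))
        ≤ ∑ j ∈ Finset.range (k + 1), (k.choose j : ℝ) * (p + n) ^ j
            * (‖iteratedDerivWithin (k - j) f (Set.Ici b) b‖ / b ^ ((n:ℝ) - (k - j : ℕ) + α)) := by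
      intro k hkn
      rw [div_le_iff₀ (Real.rpow_pos_of_pos hb _)]
      refine le_trans (hleib k (le_of_lt hkn) b hbs) ?_
      rw [Finset.sum_mul]
      apply Finset.sum_le_sum
      intro j hj
      have hjk : j ≤ k := Nat.lt_succ_iff.1 (Finset.mem_range.1 hj)
      have hjn : j ≤ n := le_trans hjk (le_of_lt hkn)
      have h2 := phi_bound hb hp hjn b hbs
      have hcast : ((k - j : ℕ) : ℝ) = (k:ℝ) - j := by
        exact Nat.cast_sub hjk
      have hBB : b ^ (p - (j:ℝ))
          = b ^ ((n:ℝ) - k + (α + p)) / b ^ ((n:ℝ) - ((k - j : ℕ) : ℝ) + α) := by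
        rw [hcast, ← Real.rpow_sub hb]; congr 1; ring
      have hBne : b ^ ((n:ℝ) - ((k - j : ℕ) : ℝ) + α) ≠ 0 :=
        (Real.rpow_pos_of_pos hb _).ne'
      calc (k.choose j : ℝ)
            * ‖iteratedDerivWithin j (fun y : ℝ => ((y ^ p : ℝ) : ℂ)) (Set.Ici b) b‖
            * ‖iteratedDerivWithin (k - j) f (Set.Ici b) b‖
          ≤ (k.choose j : ℝ) * ((p + n) ^ j * b ^ (p - (j:ℝ)))
            * ‖iteratedDerivWithin (k - j) f (Set.Ici b) b‖ :=
            mul_le_mul_of_nonneg_right (mul_le_mul_of_nonneg_left h2 (Nat.cast_nonneg _))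
              (norm_nonneg _)
        _ = (k.choose j : ℝ) * (p + n) ^ j
            * (‖iteratedDerivWithin (k - j) f (Set.Ici b) b‖
              / b ^ ((n:ℝ) - ((k - j : ℕ) : ℝ) + α)) * b ^ ((n:ℝ) - k + (α + p)) := by
            rw [hBB]; field_simp
    -- sup part
    have hsupb : (⨆ y : Set.Ici b,
        ‖iteratedDerivWithin n (fun y : ℝ => ((y ^ p : ℝ) : ℂ) * f y) (Set.Ici b) y‖ / (y : ℝ) ^ (α + p))
        ≤ ∑ i ∈ Finset.range (n + 1), (n.choose i : ℝ) * (p + n) ^ i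
          * (Nf + ∑ m ∈ Finset.Ico (n - i) n,
            ‖iteratedDerivWithin m f (Set.Ici b) b‖ / b ^ ((n:ℝ) - m + α)) := by
      apply ciSup_le
      rintro ⟨y, hy⟩
      have hy0 : (0:ℝ) < y := lt_of_lt_of_le hb hy
      exact (div_le_iff₀ (Real.rpow_pos_of_pos hy0 _)).2 (hgb y hy)
    -- assemble
    have hnorm_f : CnAlphaNorm b n α f
        = (∑ m ∈ Finset.range n,
            ‖iteratedDerivWithin m f (Set.Ici b) b‖ / b ^ ((n:ℝ) - m + α)) + Nf := rfl
    rw [CnAlphaNorm, hnorm_f]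
    have hfinal := final_comb hx0 hNf0
      (fun m => ‖iteratedDerivWithin m f (Set.Ici b) b‖ / b ^ ((n:ℝ) - m + α)) hS0 (n := n)
    have hx1 : (p + (n:ℝ) + 1) = (p + n) + 1 := by ring
    calc (∑ k ∈ Finset.range n,
            ‖iteratedDerivWithin k (fun y : ℝ => ((y ^ p : ℝ) : ℂ) * f y) (Set.Ici b) b‖
              / b ^ ((n:ℝ) - k + (α + p)))
          + ⨆ y : Set.Ici b, ‖iteratedDerivWithin n (fun y : ℝ => ((y ^ p : ℝ) : ℂ) * f y)
              (Set.Ici b) y‖ / (y : ℝ) ^ (α + p)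
        ≤ (∑ k ∈ Finset.range n, ∑ j ∈ Finset.range (k + 1), (k.choose j : ℝ) * (p + n) ^ j
            * (‖iteratedDerivWithin (k - j) f (Set.Ici b) b‖ / b ^ ((n:ℝ) - (k - j : ℕ) + α)))
          + ∑ i ∈ Finset.range (n + 1), (n.choose i : ℝ) * (p + n) ^ i
          * (Nf + ∑ m ∈ Finset.Ico (n - i) n,
            ‖iteratedDerivWithin m f (Set.Ici b) b‖ / b ^ ((n:ℝ) - m + α)) := by
          apply add_le_add _ hsupb
          apply Finset.sum_le_sum
          intro k hk
          exact hbound k (Finset.mem_range.1 hk)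
      _ ≤ ((p + n) + 1) ^ n * ((∑ m ∈ Finset.range n,
            ‖iteratedDerivWithin m f (Set.Ici b) b‖ / b ^ ((n:ℝ) - m + α)) + Nf) := hfinal
      _ = (p + (n:ℝ) + 1) ^ n * ((∑ m ∈ Finset.range n,
            ‖iteratedDerivWithin m f (Set.Ici b) b‖ / b ^ ((n:ℝ) - m + α)) + Nf) := by
          rw [hx1]
end
end

section
/- Let a∈ℝ\{0}, b>0, ε>0, y₀∈ℝ, and set y_ε := y + εy₀/(ia−ε) and b_ε := b + εy₀/(ia−ε). Then for every f∈C_α^1([b,∞)) with α≥0 and every κ∈ℕ₀ one has the integration-by-parts identity I_{a,b}^{ε,y₀}(f/y_ε^κ) = (−1/(2(ia−ε))) · ( e^{iab²−ε(b−y₀)²} f(b)/b_ε^{κ+1} − (κ+1)·I_{a,b}^{ε,y₀}(f/y_ε^{κ+2}) + I_{a,b}^{ε,y₀}(f'/y_ε^{κ+1}) ), where all integrals are absolutely convergent Lebesgue integrals. -/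
open Set Filter MeasureTheory Topology

noncomputable section

/-- The regularized integral `I_{a,b}^{ε,y₀}(g) = ∫_b^∞ e^{-ε(y-y₀)²} e^{iay²} g(y) dy`. -/
def Iab (a b ε y₀ : ℝ) (g : ℝ → ℂ) : ℂ :=
  ∫ y in Set.Ioi b,
    Complex.exp (-(ε : ℂ) * (y - y₀) ^ 2) * Complex.exp (Complex.I * a * y ^ 2) * g y

private lemma aux_tendsto (ε y₀ s : ℝ) (hε : 0 < ε) :
    Tendsto (fun y : ℝ => Real.exp (-(ε * (y - y₀) ^ 2)) * y ^ s) atTop (𝓝 0) := by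
  have h1 := tendsto_rpow_mul_exp_neg_mul_atTop_nhds_zero s 1 one_pos
  refine squeeze_zero' ?_ ?_ h1
  · filter_upwards [eventually_ge_atTop (0:ℝ)] with y hy
    have : (0:ℝ) ≤ y ^ s := Real.rpow_nonneg hy s
    positivity
  · filter_upwards [eventually_ge_atTop (max 0 (y₀ + ((1 + |y₀|)/ε + 1)))] with y hy
    have hy0 : 0 ≤ y := le_trans (le_max_left _ _) hy
    have hy1 : y₀ + ((1 + |y₀|)/ε + 1) ≤ y := le_trans (le_max_right _ _) hy
    have key : y ≤ ε * (y - y₀)^2 := by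
      have h4 : 1 ≤ y - y₀ := by
        have : (0:ℝ) ≤ (1 + |y₀|)/ε := by positivity
        linarith
      have h5 : (1 + |y₀|)/ε ≤ y - y₀ := by linarith
      have h6 : 1 + |y₀| ≤ ε * (y - y₀) := by
        rw [div_le_iff₀ hε] at h5; linarith
      nlinarith [le_abs_self y₀, abs_nonneg y₀]
    have h7 : Real.exp (-(ε * (y - y₀) ^ 2)) * y ^ s ≤ Real.exp (-1 * y) * y ^ s := by
      apply mul_le_mul_of_nonneg_right (Real.exp_le_exp.mpr (by linarith)) (Real.rpow_nonneg hy0 s)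
    calc Real.exp (-(ε * (y - y₀) ^ 2)) * y ^ s ≤ Real.exp (-1 * y) * y ^ s := h7
      _ = y ^ s * Real.exp (-1 * y) := mul_comm _ _

private lemma aux_bound (ε y₀ b s : ℝ) (hε : 0 < ε) (hb : 0 < b) :
    ∃ C : ℝ, ∀ y ∈ Ici b, Real.exp (-(ε * (y - y₀) ^ 2)) * y ^ s ≤ C := by
  obtain ⟨R, hR⟩ := Filter.eventually_atTop.mp
    ((aux_tendsto ε y₀ s hε).eventually_lt_const one_pos)
  have hcont : ContinuousOn (fun y : ℝ => Real.exp (-(ε * (y - y₀) ^ 2)) * y ^ s)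
      (Icc b (max b R)) := by
    intro y hy
    have hy0 : y ≠ 0 := ne_of_gt (lt_of_lt_of_le hb hy.1)
    exact ((Real.continuous_exp.comp (by continuity)).continuousAt.continuousWithinAt).mul
      ((Real.continuousAt_rpow_const y s (Or.inl hy0)).continuousWithinAt)
  obtain ⟨C, hC⟩ := (isCompact_Icc (a := b) (b := max b R)).exists_bound_of_continuousOn hcont
  refine ⟨max C 1, fun y hy => ?_⟩
  rcases le_total y (max b R) with h | h
  · have := hC y ⟨hy, h⟩
    rw [Real.norm_eq_abs] at this
    exact le_trans (le_trans (le_abs_self _) this) (le_max_left _ _)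
  · exact le_trans (hR y (le_trans (le_max_right b R) h)).le (le_max_right C 1)

private lemma aux_integrable (ε y₀ b s : ℝ) (hε : 0 < ε) (hb : 0 < b) :
    IntegrableOn (fun y : ℝ => Real.exp (-(ε * (y - y₀) ^ 2)) * y ^ s) (Ioi b) := by
  obtain ⟨C, hC⟩ := aux_bound (ε/2) y₀ b s (half_pos hε) hb
  have hint : IntegrableOn (fun y : ℝ => C * Real.exp (-(ε/2) * (y - y₀) ^ 2)) (Ioi b) := by
    have h0 : Integrable (fun y : ℝ => Real.exp (-(ε/2) * y ^ 2)) :=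
      integrable_exp_neg_mul_sq (half_pos hε)
    exact ((h0.comp_sub_right y₀).const_mul C).integrableOn
  refine hint.mono' ?_ ?_
  · refine ContinuousOn.aestronglyMeasurable ?_ measurableSet_Ioi
    intro y hy
    have hy0 : y ≠ 0 := ne_of_gt (lt_trans hb hy)
    exact ((Real.continuous_exp.comp (by continuity)).continuousAt.continuousWithinAt).mul
      ((Real.continuousAt_rpow_const y s (Or.inl hy0)).continuousWithinAt)
  · rw [ae_restrict_iff' measurableSet_Ioi]
    filter_upwards with y hy
    have hyb : b ≤ y := le_of_lt hy
    have hy0 : (0:ℝ) ≤ y := le_of_lt (lt_trans hb hy)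
    rw [Real.norm_eq_abs,
      abs_of_nonneg (mul_nonneg (Real.exp_nonneg _) (Real.rpow_nonneg hy0 _))]
    have hsplit : Real.exp (-(ε * (y - y₀)^2))
        = Real.exp (-(ε/2) * (y-y₀)^2) * Real.exp (-(ε/2 * (y-y₀)^2)) := by
      rw [← Real.exp_add]; ring_nf
    rw [hsplit, mul_assoc]
    calc Real.exp (-(ε/2) * (y-y₀)^2) * (Real.exp (-(ε/2 * (y-y₀)^2)) * y ^ s)
        ≤ Real.exp (-(ε/2) * (y-y₀)^2) * C :=
          mul_le_mul_of_nonneg_left (hC y hyb) (Real.exp_nonneg _)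
      _ = C * Real.exp (-(ε/2) * (y-y₀)^2) := mul_comm _ _

set_option maxHeartbeats 1000000 in
/-- the integration by parts identity
`I_{a,b}^{ε,y₀}(f/y_ε^κ) = (-1/(2(ia-ε)))·(e^{iab²-ε(b-y₀)²} f(b)/b_ε^{κ+1}
  - (κ+1)·I_{a,b}^{ε,y₀}(f/y_ε^{κ+2}) + I_{a,b}^{ε,y₀}(f'/y_ε^{κ+1}))`,
with all integrals absolutely convergent. -/
theorem stmt10 (a : ℝ) (ha : a ≠ 0) (b : ℝ) (hb : 0 < b) (ε : ℝ) (hε : 0 < ε) (y₀ : ℝ)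
    (α : ℝ) (hα : 0 ≤ α) (f : ℝ → ℂ) (hf : MemCnAlpha b 1 α f) (κ : ℕ) :
    (∀ j ∈ ({κ, κ + 2} : Finset ℕ),
      MeasureTheory.IntegrableOn
        (fun y : ℝ => Complex.exp (-(ε : ℂ) * (y - y₀) ^ 2) * Complex.exp (Complex.I * a * y ^ 2) *
          (f y / ((y : ℂ) + ε * y₀ / (Complex.I * a - ε)) ^ j)) (Set.Ioi b)) ∧
    MeasureTheory.IntegrableOn
      (fun y : ℝ => Complex.exp (-(ε : ℂ) * (y - y₀) ^ 2) * Complex.exp (Complex.I * a * y ^ 2) *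
        (derivWithin f (Set.Ici b) y / ((y : ℂ) + ε * y₀ / (Complex.I * a - ε)) ^ (κ + 1)))
      (Set.Ioi b) ∧
    Iab a b ε y₀ (fun y => f y / ((y : ℂ) + ε * y₀ / (Complex.I * a - ε)) ^ κ) =
      -1 / (2 * (Complex.I * a - ε)) *
        (Complex.exp (Complex.I * a * b ^ 2 - ε * ((b : ℂ) - y₀) ^ 2) * f b /
            ((b : ℂ) + ε * y₀ / (Complex.I * a - ε)) ^ (κ + 1)
          - ((κ : ℂ) + 1) *
              Iab a b ε y₀ (fun y => f y / ((y : ℂ) + ε * y₀ / (Complex.I * a - ε)) ^ (κ + 2))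
          + Iab a b ε y₀
              (fun y => derivWithin f (Set.Ici b) y /
                ((y : ℂ) + ε * y₀ / (Complex.I * a - ε)) ^ (κ + 1))) := by
  obtain ⟨hf1, M, hM0, hM⟩ := hf
  set c : ℂ := Complex.I * a - ε with hc_def
  set d : ℂ := (ε : ℂ) * (y₀ : ℂ) / c with hd_def
  set f' : ℝ → ℂ := derivWithin f (Set.Ici b) with hf'_def
  have hc : c ≠ 0 := by
    intro h
    apply ha
    have := congrArg Complex.im h
    simpa [hc_def] using this
  have hc2 : (2 : ℂ) * c ≠ 0 := mul_ne_zero two_ne_zero hc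
  obtain ⟨δ, hδ0, hδ'⟩ : ∃ δ : ℝ, 0 < δ ∧ ∀ y : ℝ, b ≤ y → δ ≤ ‖(y : ℂ) + d‖ := by
    by_cases hy₀ : y₀ = 0
    · refine ⟨b, hb, fun y hy => ?_⟩
      have : d = 0 := by simp [hd_def, hy₀]
      rw [this, add_zero, Complex.norm_real, Real.norm_eq_abs]
      exact le_trans hy (le_abs_self y)
    · have him : d.im = -(ε * y₀ * a) / Complex.normSq c := by
        rw [hd_def, Complex.div_im]
        have h1 : ((ε : ℂ) * (y₀ : ℂ)).im = 0 := by simp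
        have h2 : ((ε : ℂ) * (y₀ : ℂ)).re = ε * y₀ := by simp
        have h3 : c.im = a := by simp [hc_def]
        rw [h1, h2, h3]
        ring
      have hnsq : Complex.normSq c ≠ 0 := by
        simpa using hc
      have him0 : d.im ≠ 0 := by
        rw [him]
        exact div_ne_zero (by simp [hε.ne', hy₀, ha]) hnsq
      refine ⟨|d.im|, abs_pos.mpr him0, fun y hy => ?_⟩
      have h4 : ((y : ℂ) + d).im = d.im := by simp
      calc |d.im| = |((y : ℂ) + d).im| := by rw [h4]
        _ ≤ ‖(y : ℂ) + d‖ := Complex.abs_im_le_norm _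
  have hPne : ∀ y : ℝ, b ≤ y → ((y : ℂ) + d) ≠ 0 := by
    intro y hy h
    have := hδ' y hy
    rw [h, norm_zero] at this
    linarith
  have hder : ∀ y ∈ Ici b, HasDerivWithinAt f (f' y) (Set.Ici b) y := by
    intro y hy
    exact ((hf1.differentiableOn (by norm_num)) y hy).hasDerivWithinAt
  have hM' : ∀ y ∈ Ici b, ‖f' y‖ ≤ M * y ^ α := by
    intro y hy
    have := hM y hy
    rwa [iteratedDerivWithin_one] at this
  obtain ⟨K, hK0, hK⟩ : ∃ K : ℝ, 0 ≤ K ∧ ∀ y ∈ Ici b, ‖f y‖ ≤ K * y ^ (α + 1) := by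
    refine ⟨‖f b‖ / b ^ (α + 1) + M, by positivity, fun y hy => ?_⟩
    have hy0 : (0:ℝ) < y := lt_of_lt_of_le hb hy
    have h1 : ‖f y - f b‖ ≤ (M * y ^ α) * ‖y - b‖ := by
      refine Convex.norm_image_sub_le_of_norm_hasDerivWithin_le
        (f' := f') (fun t ht => (hder t ht.1).mono Icc_subset_Ici_self) ?_ (convex_Icc b y)
        (left_mem_Icc.mpr hy) (right_mem_Icc.mpr hy)
      intro t ht
      refine le_trans (hM' t ht.1) (mul_le_mul_of_nonneg_left ?_ hM0)
      exact Real.rpow_le_rpow (le_of_lt (lt_of_lt_of_le hb ht.1)) ht.2 hα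
    have h2 : ‖f y‖ ≤ ‖f b‖ + M * y ^ α * (y - b) := by
      have h2a : ‖f y‖ ≤ ‖f b‖ + ‖f y - f b‖ := by
        calc ‖f y‖ = ‖f b + (f y - f b)‖ := by ring_nf
          _ ≤ ‖f b‖ + ‖f y - f b‖ := norm_add_le _ _
      rw [Real.norm_eq_abs, abs_of_nonneg (sub_nonneg.mpr (mem_Ici.mp hy))] at h1
      linarith
    have h3 : y ^ (α + 1) = y ^ α * y := Real.rpow_add_one (ne_of_gt hy0) α
    have h4 : ‖f b‖ ≤ ‖f b‖ / b ^ (α + 1) * y ^ (α + 1) := by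
      rw [div_mul_eq_mul_div, le_div_iff₀ (by positivity)]
      exact mul_le_mul_of_nonneg_left (Real.rpow_le_rpow hb.le hy (by linarith)) (norm_nonneg _)
    have h5 : M * y ^ α * (y - b) ≤ M * y ^ (α + 1) := by
      rw [h3, ← mul_assoc]
      exact mul_le_mul_of_nonneg_left (by linarith) (mul_nonneg hM0 (Real.rpow_nonneg hy0.le _))
    calc ‖f y‖ ≤ ‖f b‖ + M * y ^ α * (y - b) := h2
      _ ≤ ‖f b‖ / b ^ (α + 1) * y ^ (α + 1) + M * y ^ (α + 1) := add_le_add h4 h5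
      _ = (‖f b‖ / b ^ (α + 1) + M) * y ^ (α + 1) := by ring
  have hnorm : ∀ y : ℝ, ‖Complex.exp (-(ε : ℂ) * ((y : ℂ) - (y₀ : ℂ)) ^ 2) *
      Complex.exp (Complex.I * (a : ℂ) * (y : ℂ) ^ 2)‖ = Real.exp (-(ε * (y - y₀) ^ 2)) := by
    intro y
    rw [norm_mul, Complex.norm_exp, Complex.norm_exp]
    have e1 : (-(ε : ℂ) * ((y : ℂ) - (y₀ : ℂ)) ^ 2) = ((-(ε * (y - y₀) ^ 2) : ℝ) : ℂ) := by
      push_cast; ring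
    have e2 : (Complex.I * (a : ℂ) * (y : ℂ) ^ 2).re = 0 := by
      simp [Complex.mul_re, ← Complex.ofReal_pow]
    rw [e1, Complex.ofReal_re, e2, Real.exp_zero, mul_one]
  have hfc : ContinuousOn f (Ici b) := hf1.continuousOn
  have hf'c : ContinuousOn f' (Ici b) :=
    hf1.continuousOn_derivWithin (uniqueDiffOn_Ici b) (by norm_num)
  have key : ∀ (g : ℝ → ℂ) (N s : ℝ), 0 ≤ N → ContinuousOn g (Ici b) →
      (∀ y ∈ Ici b, ‖g y‖ ≤ N * y ^ s) → ∀ j : ℕ,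
      IntegrableOn (fun y : ℝ => Complex.exp (-(ε : ℂ) * ((y : ℂ) - (y₀ : ℂ)) ^ 2) *
        Complex.exp (Complex.I * (a : ℂ) * (y : ℂ) ^ 2) * (g y / ((y : ℂ) + d) ^ j))
        (Ioi b) := by
    intro g N s hN hgc hg j
    have h0 := (aux_integrable ε y₀ b s hε hb).const_mul (N / δ ^ j)
    refine h0.mono' ?_ ?_
    · refine ContinuousOn.aestronglyMeasurable ?_ measurableSet_Ioi
      refine ContinuousOn.mul (Continuous.continuousOn (by fun_prop)) ?_
      refine ContinuousOn.div (hgc.mono Ioi_subset_Ici_self)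
        (Continuous.continuousOn (by fun_prop)) ?_
      exact fun y hy => pow_ne_zero j (hPne y (le_of_lt hy))
    · rw [ae_restrict_iff' measurableSet_Ioi]
      filter_upwards with y hy
      have hyb : b ≤ y := le_of_lt hy
      have hy0 : (0:ℝ) < y := lt_of_lt_of_le hb hyb
      rw [norm_mul, hnorm y, norm_div, norm_pow]
      have hb1 : ‖g y‖ ≤ N * y ^ s := hg y hyb
      have hb2 : δ ^ j ≤ ‖(y : ℂ) + d‖ ^ j := pow_le_pow_left₀ hδ0.le (hδ' y hyb) j
      have hδj : (0:ℝ) < δ ^ j := pow_pos hδ0 j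
      calc Real.exp (-(ε * (y - y₀) ^ 2)) * (‖g y‖ / ‖(y : ℂ) + d‖ ^ j)
          ≤ Real.exp (-(ε * (y - y₀) ^ 2)) * ((N * y ^ s) / δ ^ j) := by
            refine mul_le_mul_of_nonneg_left ?_ (Real.exp_nonneg _)
            exact div_le_div₀ (mul_nonneg hN (Real.rpow_nonneg hy0.le s)) hb1 hδj hb2
        _ = N / δ ^ j * (Real.exp (-(ε * (y - y₀) ^ 2)) * y ^ s) := by ring
  have hI0 := key f K (α + 1) hK0 hfc hK κ
  have hI2 := key f K (α + 1) hK0 hfc hK (κ + 2)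
  have hI1 := key f' M α hM0 hf'c hM' (κ + 1)
  refine ⟨?_, hI1, ?_⟩
  · intro j hj
    simp only [Finset.mem_insert, Finset.mem_singleton] at hj
    rcases hj with rfl | rfl
    exacts [hI0, hI2]
  set F : ℝ → ℂ := fun y => (2 * c)⁻¹ *
    (Complex.exp (-(ε : ℂ) * ((y : ℂ) - (y₀ : ℂ)) ^ 2) *
      Complex.exp (Complex.I * (a : ℂ) * (y : ℂ) ^ 2) * (f y / ((y : ℂ) + d) ^ (κ + 1)))
    with hF_def
  have hFderiv : ∀ y ∈ Ioi b, HasDerivAt F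
      (Complex.exp (-(ε : ℂ) * ((y : ℂ) - (y₀ : ℂ)) ^ 2) *
          Complex.exp (Complex.I * (a : ℂ) * (y : ℂ) ^ 2) * (f y / ((y : ℂ) + d) ^ κ)
        + (2 * c)⁻¹ * (Complex.exp (-(ε : ℂ) * ((y : ℂ) - (y₀ : ℂ)) ^ 2) *
            Complex.exp (Complex.I * (a : ℂ) * (y : ℂ) ^ 2) * (f' y / ((y : ℂ) + d) ^ (κ + 1)))
        - ((κ : ℂ) + 1) * (2 * c)⁻¹ * (Complex.exp (-(ε : ℂ) * ((y : ℂ) - (y₀ : ℂ)) ^ 2) *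
            Complex.exp (Complex.I * (a : ℂ) * (y : ℂ) ^ 2) * (f y / ((y : ℂ) + d) ^ (κ + 2)))) y := by
    intro y hy
    have hyb : b < y := hy
    have hne : ((y : ℂ) + d) ≠ 0 := hPne y hyb.le
    have hfy : HasDerivAt f (f' y) y := (hder y hyb.le).hasDerivAt (Ici_mem_nhds hyb)
    have hE1 : HasDerivAt (fun t : ℝ => Complex.exp (-(ε : ℂ) * ((t : ℂ) - (y₀ : ℂ)) ^ 2))
        (Complex.exp (-(ε : ℂ) * ((y : ℂ) - (y₀ : ℂ)) ^ 2) *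
          (-(ε : ℂ) * ((2:ℕ) * ((y : ℂ) - (y₀ : ℂ)) ^ (2-1) * 1))) y :=
      (((((hasDerivAt_id ((y : ℂ))).sub_const ((y₀ : ℂ))).pow 2).const_mul
        (-(ε : ℂ))).cexp).comp_ofReal
    have hE2 : HasDerivAt (fun t : ℝ => Complex.exp (Complex.I * (a : ℂ) * (t : ℂ) ^ 2))
        (Complex.exp (Complex.I * (a : ℂ) * (y : ℂ) ^ 2) *
          (Complex.I * (a : ℂ) * ((2:ℕ) * (y : ℂ) ^ (2-1) * 1))) y :=
      ((((hasDerivAt_id ((y : ℂ))).pow 2).const_mul (Complex.I * (a : ℂ))).cexp).comp_ofReal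
    have hPpow : HasDerivAt (fun t : ℝ => ((t : ℂ) + d) ^ (κ + 1))
        (((κ + 1 : ℕ) : ℂ) * ((y : ℂ) + d) ^ (κ + 1 - 1) * 1) y :=
      (((hasDerivAt_id ((y : ℂ))).add_const d).pow (κ + 1)).comp_ofReal
    have hE : HasDerivAt (fun t : ℝ => Complex.exp (-(ε : ℂ) * ((t : ℂ) - (y₀ : ℂ)) ^ 2) *
        Complex.exp (Complex.I * (a : ℂ) * (t : ℂ) ^ 2))
        ((2 * c * ((y : ℂ) + d)) * (Complex.exp (-(ε : ℂ) * ((y : ℂ) - (y₀ : ℂ)) ^ 2) *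
          Complex.exp (Complex.I * (a : ℂ) * (y : ℂ) ^ 2))) y := by
      have hcne : (Complex.I * (a : ℂ) - (ε : ℂ)) ≠ 0 := by rw [← hc_def]; exact hc
      refine (hE1.mul hE2).congr_deriv ?_
      symm
      rw [hd_def, hc_def]
      norm_num
      field_simp
      ring
    have hdiv := hfy.div hPpow (pow_ne_zero _ hne)
    have hall := (hE.mul hdiv).const_mul ((2 * c)⁻¹)
    rw [hF_def]
    refine hall.congr_deriv ?_
    symm
    simp only [Pi.div_apply, Nat.add_sub_cancel, Nat.cast_add, Nat.cast_one, pow_one, mul_one]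
    field_simp [hc, hne]
    ring
  have hGint : IntegrableOn (fun y : ℝ =>
      Complex.exp (-(ε : ℂ) * ((y : ℂ) - (y₀ : ℂ)) ^ 2) *
          Complex.exp (Complex.I * (a : ℂ) * (y : ℂ) ^ 2) * (f y / ((y : ℂ) + d) ^ κ)
        + (2 * c)⁻¹ * (Complex.exp (-(ε : ℂ) * ((y : ℂ) - (y₀ : ℂ)) ^ 2) *
            Complex.exp (Complex.I * (a : ℂ) * (y : ℂ) ^ 2) * (f' y / ((y : ℂ) + d) ^ (κ + 1)))
        - ((κ : ℂ) + 1) * (2 * c)⁻¹ * (Complex.exp (-(ε : ℂ) * ((y : ℂ) - (y₀ : ℂ)) ^ 2) *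
            Complex.exp (Complex.I * (a : ℂ) * (y : ℂ) ^ 2) * (f y / ((y : ℂ) + d) ^ (κ + 2))))
      (Ioi b) := by
    have h2 := hI1.const_mul ((2 * c)⁻¹)
    have h3 := hI2.const_mul (((κ : ℂ) + 1) * (2 * c)⁻¹)
    have h4 := (hI0.add h2).sub h3
    exact h4
  have hFb : ContinuousWithinAt F (Ici b) b := by
    rw [hF_def]
    have h1 : ContinuousWithinAt (fun t : ℝ => Complex.exp (-(ε : ℂ) * ((t : ℂ) - (y₀ : ℂ)) ^ 2) *
        Complex.exp (Complex.I * (a : ℂ) * (t : ℂ) ^ 2)) (Ici b) b :=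
      (Continuous.continuousWithinAt (by fun_prop))
    have h2 : ContinuousWithinAt f (Ici b) b := hfc b self_mem_Ici
    have h3 : ContinuousWithinAt (fun t : ℝ => ((t : ℂ) + d) ^ (κ + 1)) (Ici b) b :=
      (Continuous.continuousWithinAt (by fun_prop))
    exact continuousWithinAt_const.mul (h1.mul (h2.div h3 (pow_ne_zero _ (hPne b le_rfl))))
  have hFtend : Tendsto F atTop (𝓝 0) := by
    have htend0 : Tendsto (fun y : ℝ => (‖(2 * c)⁻¹‖ * (K / δ ^ (κ + 1))) *
        (Real.exp (-(ε * (y - y₀) ^ 2)) * y ^ (α + 1))) atTop (𝓝 0) := by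
      simpa using (aux_tendsto ε y₀ (α + 1) hε).const_mul (‖(2 * c)⁻¹‖ * (K / δ ^ (κ + 1)))
    refine squeeze_zero_norm' ?_ htend0
    filter_upwards [eventually_ge_atTop b] with y hy
    have hy0 : (0:ℝ) < y := lt_of_lt_of_le hb hy
    have hFy : F y = (2 * c)⁻¹ *
        (Complex.exp (-(ε : ℂ) * ((y : ℂ) - (y₀ : ℂ)) ^ 2) *
          Complex.exp (Complex.I * (a : ℂ) * (y : ℂ) ^ 2) * (f y / ((y : ℂ) + d) ^ (κ + 1))) := rfl
    rw [hFy, norm_mul, norm_mul, hnorm y, norm_div, norm_pow]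
    have hb2 : δ ^ (κ+1) ≤ ‖(y : ℂ) + d‖ ^ (κ+1) := pow_le_pow_left₀ hδ0.le (hδ' y hy) (κ+1)
    have hδj : (0:ℝ) < δ ^ (κ+1) := pow_pos hδ0 (κ+1)
    calc ‖(2 * c)⁻¹‖ * (Real.exp (-(ε * (y - y₀) ^ 2)) * (‖f y‖ / ‖(y : ℂ) + d‖ ^ (κ + 1)))
        ≤ ‖(2 * c)⁻¹‖ * (Real.exp (-(ε * (y - y₀) ^ 2)) * ((K * y ^ (α + 1)) / δ ^ (κ + 1))) := by
          refine mul_le_mul_of_nonneg_left (mul_le_mul_of_nonneg_left ?_ (Real.exp_nonneg _))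
            (norm_nonneg _)
          exact div_le_div₀ (mul_nonneg hK0 (Real.rpow_nonneg hy0.le _)) (hK y hy) hδj hb2
      _ = (‖(2 * c)⁻¹‖ * (K / δ ^ (κ + 1))) * (Real.exp (-(ε * (y - y₀) ^ 2)) * y ^ (α + 1)) := by
          ring
  have hIBP := MeasureTheory.integral_Ioi_of_hasDerivAt_of_tendsto hFb hFderiv hGint hFtend
  have hB : IntegrableOn (fun y : ℝ => (2 * c)⁻¹ * (Complex.exp (-(ε : ℂ) * ((y : ℂ) - (y₀ : ℂ)) ^ 2) *
      Complex.exp (Complex.I * (a : ℂ) * (y : ℂ) ^ 2) * (f' y / ((y : ℂ) + d) ^ (κ + 1)))) (Ioi b) :=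
    hI1.const_mul _
  have hC : IntegrableOn (fun y : ℝ => ((κ : ℂ) + 1) * (2 * c)⁻¹ *
      (Complex.exp (-(ε : ℂ) * ((y : ℂ) - (y₀ : ℂ)) ^ 2) *
        Complex.exp (Complex.I * (a : ℂ) * (y : ℂ) ^ 2) * (f y / ((y : ℂ) + d) ^ (κ + 2)))) (Ioi b) := by
    have := hI2.const_mul (((κ : ℂ) + 1) * (2 * c)⁻¹)
    exact this
  have hAB : IntegrableOn (fun y : ℝ =>
      Complex.exp (-(ε : ℂ) * ((y : ℂ) - (y₀ : ℂ)) ^ 2) *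
          Complex.exp (Complex.I * (a : ℂ) * (y : ℂ) ^ 2) * (f y / ((y : ℂ) + d) ^ κ)
        + (2 * c)⁻¹ * (Complex.exp (-(ε : ℂ) * ((y : ℂ) - (y₀ : ℂ)) ^ 2) *
            Complex.exp (Complex.I * (a : ℂ) * (y : ℂ) ^ 2) * (f' y / ((y : ℂ) + d) ^ (κ + 1)))) (Ioi b) := by
    have := hI0.add hB
    exact this
  rw [MeasureTheory.integral_sub hAB hC, MeasureTheory.integral_add hI0 hB,
    MeasureTheory.integral_const_mul, MeasureTheory.integral_const_mul] at hIBP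
  have hFbv : F b = (2 * c)⁻¹ *
      (Complex.exp (-(ε : ℂ) * ((b : ℂ) - (y₀ : ℂ)) ^ 2) *
        Complex.exp (Complex.I * (a : ℂ) * (b : ℂ) ^ 2) * (f b / ((b : ℂ) + d) ^ (κ + 1))) := rfl
  rw [hFbv] at hIBP
  have hexp : Complex.exp (Complex.I * (a : ℂ) * (b : ℂ) ^ 2 - (ε : ℂ) * ((b : ℂ) - (y₀ : ℂ)) ^ 2)
      = Complex.exp (-(ε : ℂ) * ((b : ℂ) - (y₀ : ℂ)) ^ 2) *
        Complex.exp (Complex.I * (a : ℂ) * (b : ℂ) ^ 2) := by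
    rw [← Complex.exp_add]; congr 1; ring
  simp only [Iab]
  rw [hexp]
  linear_combination hIBP
end
end

section
/- Let a∈ℝ\{0}, b>0, ε>0, y₀∈ℝ, m∈ℕ₀, n∈ℕ, and set y_ε := y + εy₀/(ia−ε), b_ε := b + εy₀/(ia−ε). Define coefficients C_{k,l}∈ℝ recursively by C_{k,0} := (−1/2)^{k+1} and C_{k,l+1} := Σ_{i=0}^k ((−1)^{i+k}(i+1+2l)/2^{k+1−i}) C_{i,l}. Then for every f∈C_α^n([b,∞)), α≥0, one has I_{a,b}^{ε,y₀}(f) = Σ_{k=0}^{n−1} Σ_{l=0}^m C_{k,l} e^{iab²−ε(b−y₀)²} f^{(k)}(b) / ((ia−ε)^{k+1+l} b_ε^{k+1+2l}) + Σ_{l=0}^m (C_{n−1,l}/(ia−ε)^{n+l}) I_{a,b}^{ε,y₀}(f^{(n)}/y_ε^{n+2l}) − Σ_{k=0}^{n−1} ((k+1+2m) C_{k,m}/(ia−ε)^{k+1+m}) I_{a,b}^{ε,y₀}(f^{(k)}/y_ε^{k+2+2m}). -/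
open Set Filter MeasureTheory Topology

noncomputable section

/-- The recursively defined coefficients `C_{k,l}`:
`C_{k,0} = (-1/2)^{k+1}` and `C_{k,l+1} = Σ_{i=0}^k ((-1)^{i+k}(i+1+2l)/2^{k+1-i})·C_{i,l}`. -/
def Ccoef : ℕ → ℕ → ℝ
  | k, 0 => (-(1 : ℝ) / 2) ^ (k + 1)
  | k, l + 1 =>
      ∑ i ∈ Finset.range (k + 1),
        (-1 : ℝ) ^ (i + k) * ((i : ℝ) + 1 + 2 * l) / 2 ^ (k + 1 - i) * Ccoef i l
  termination_by k l => l

namespace S11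
def cc (a ε : ℝ) : ℂ := Complex.I * a - ε
def ww (a ε y₀ : ℝ) : ℂ := (ε : ℂ) * y₀ / cc a ε
def EE (a ε y₀ : ℝ) (y : ℝ) : ℂ :=
  Complex.exp (-(ε : ℂ) * ((y : ℂ) - y₀) ^ 2) * Complex.exp (Complex.I * a * (y : ℂ) ^ 2)
variable {a b ε y₀ : ℝ}
lemma cc_ne (ha : a ≠ 0) : cc a ε ≠ 0 := by
  intro h
  have : (cc a ε).im = 0 := by rw [h]; simp
  simp [cc] at this
  exact ha this
lemma cc_mul_ww (ha : a ≠ 0) : cc a ε * ww a ε y₀ = (ε : ℂ) * y₀ := by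
  rw [ww, mul_div_cancel₀ _ (cc_ne ha)]

lemma ww_im_ne (ha : a ≠ 0) (hε : 0 < ε) (hy₀ : y₀ ≠ 0) : (ww a ε y₀).im ≠ 0 := by
  intro h
  have h2 := cc_mul_ww (ε := ε) (y₀ := y₀) ha
  have h3 := congrArg Complex.im h2
  rw [Complex.mul_im, h] at h3
  simp [cc] at h3
  have hre : (ww a ε y₀).re = 0 := by
    rcases h3 with h3 | h3
    · exact absurd h3 ha
    · exact h3
  have hw0 : ww a ε y₀ = 0 := Complex.ext hre h
  rw [hw0, mul_zero] at h2
  have := h2.symm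
  simp at this
  rcases this with h | h
  · exact hε.ne' h
  · exact hy₀ h

lemma lb (ha : a ≠ 0) (hb : 0 < b) (hε : 0 < ε) :
    ∃ δ > 0, ∀ y : ℝ, b ≤ y → δ ≤ ‖(y : ℂ) + ww a ε y₀‖ := by
  rcases eq_or_ne y₀ 0 with rfl | hy₀
  · refine ⟨b, hb, fun y hy => ?_⟩
    simp only [ww, Complex.ofReal_zero, mul_zero, zero_div, add_zero, Complex.norm_real,
      Real.norm_eq_abs]
    exact le_trans hy (le_abs_self y)
  · refine ⟨|(ww a ε y₀).im|, abs_pos.mpr (ww_im_ne ha hε hy₀), fun y hy => ?_⟩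
    calc |(ww a ε y₀).im| = |((y:ℂ) + ww a ε y₀).im| := by simp
    _ ≤ ‖(y:ℂ) + ww a ε y₀‖ := Complex.abs_im_le_norm _
    _ = ‖(y:ℂ) + ww a ε y₀‖ := rfl

lemma wne (ha : a ≠ 0) (hb : 0 < b) (hε : 0 < ε) {y : ℝ} (hy : b ≤ y) :
    (y : ℂ) + ww a ε y₀ ≠ 0 := by
  obtain ⟨δ, hδ, h⟩ := lb (b := b) (y₀ := y₀) ha hb hε
  intro h0
  have := h y hy
  rw [h0] at this
  simp at this
  linarith

lemma EE_hasDerivAt (ha : a ≠ 0) (y : ℝ) :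
    HasDerivAt (EE a ε y₀) (2 * cc a ε * ((y : ℂ) + ww a ε y₀) * EE a ε y₀ y) y := by
  have h1 : HasDerivAt (fun z : ℂ => Complex.exp (-(ε:ℂ) * (z - y₀) ^ 2))
      ((-(ε:ℂ) * (2 * ((y:ℂ) - y₀))) * Complex.exp (-(ε:ℂ) * ((y:ℂ) - y₀) ^ 2)) (y : ℂ) := by
    have : HasDerivAt (fun z : ℂ => -(ε:ℂ) * (z - y₀) ^ 2) (-(ε:ℂ) * (2 * ((y:ℂ) - y₀))) (y:ℂ) := by
      have := ((hasDerivAt_id (y:ℂ)).sub_const (y₀:ℂ)).pow 2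
      have := this.const_mul (-(ε:ℂ))
      refine this.congr_deriv (Eq.symm ?_)
      simp only [id_eq]; ring
    simpa [mul_comm] using this.cexp
  have h2 : HasDerivAt (fun z : ℂ => Complex.exp (Complex.I * a * z ^ 2))
      ((Complex.I * a * (2 * (y:ℂ))) * Complex.exp (Complex.I * a * (y:ℂ) ^ 2)) (y : ℂ) := by
    have : HasDerivAt (fun z : ℂ => Complex.I * a * z ^ 2) (Complex.I * a * (2 * (y:ℂ))) (y:ℂ) := by
      have := (hasDerivAt_id (y:ℂ)).pow 2
      have := this.const_mul (Complex.I * (a:ℂ))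
      refine this.congr_deriv (Eq.symm ?_)
      simp only [id_eq]; ring
    simpa [mul_comm] using this.cexp
  have h3 := (h1.mul h2).comp_ofReal
  have key : 2 * cc a ε * ((y : ℂ) + ww a ε y₀) =
      (-(ε:ℂ) * (2*((y:ℂ)-y₀))) + Complex.I * a * (2*(y:ℂ)) := by
    have hcw := cc_mul_ww (ε := ε) (y₀ := y₀) ha
    calc 2 * cc a ε * ((y:ℂ) + ww a ε y₀) = 2*(cc a ε * (y:ℂ) + cc a ε * ww a ε y₀) := by ring
    _ = 2*(cc a ε * (y:ℂ) + (ε:ℂ) * y₀) := by rw [hcw]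
    _ = _ := by rw [cc]; ring
  refine h3.congr_deriv (Eq.symm ?_)
  rw [EE, key]
  ring

lemma norm_EE (y : ℝ) : ‖EE a ε y₀ y‖ = Real.exp (-ε * (y - y₀)^2) := by
  have e1 : (-(ε:ℂ) * ((y:ℂ) - y₀) ^ 2) = ((-ε * (y-y₀)^2 : ℝ) : ℂ) := by push_cast; ring
  rw [EE, e1, norm_mul, Complex.norm_exp,
    Complex.norm_exp]
  have : (Complex.I * (a:ℂ) * (y:ℂ) ^ 2).re = 0 := by
    simp [Complex.mul_re, ← Complex.ofReal_pow]
  rw [this, Complex.ofReal_re, Real.exp_zero, mul_one]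
/-- polynomial bound predicate -/
def PB (b β : ℝ) (g : ℝ → ℂ) : Prop := ∃ M : ℝ, 0 ≤ M ∧ ∀ y : ℝ, b ≤ y → ‖g y‖ ≤ M * y ^ β

lemma integrable_gauss_exp (hε : 0 < ε) (y₀ c₀ : ℝ) :
    Integrable (fun y : ℝ => Real.exp (-ε * (y - y₀)^2 + c₀ * y)) := by
  have h : (fun y : ℝ => Real.exp (-ε * (y - y₀)^2 + c₀ * y)) =
      fun y => Real.exp (c₀ * y₀ + c₀^2/(4*ε)) * Real.exp (-ε * (y - (y₀ + c₀/(2*ε)))^2) := by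
    funext y
    rw [← Real.exp_add]
    congr 1
    field_simp
    ring
  rw [h]
  have h2 : Integrable (fun y : ℝ => Real.exp (-ε * (y - (y₀ + c₀/(2*ε)))^2)) := by
    have := (integrable_exp_neg_mul_sq hε).comp_sub_right (y₀ + c₀/(2*ε))
    simpa using this
  exact h2.const_mul _

lemma rpow_le_exp (hβ : 0 ≤ β) {y : ℝ} (hy : 0 < y) : y ^ β ≤ Real.exp (β * y) := by
  rw [Real.rpow_def_of_pos hy, Real.exp_le_exp]
  have : Real.log y ≤ y := Real.log_le_sub_one_of_pos hy |>.trans (by linarith)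
  calc Real.log y * β ≤ y * β := by nlinarith
  _ = β * y := by ring

lemma cont_den (ha : a ≠ 0) (hb : 0 < b) (hε : 0 < ε) (p : ℕ) :
    ContinuousOn (fun y : ℝ => (((y : ℂ) + ww a ε y₀)^p)⁻¹) (Ici b) := by
  apply ContinuousOn.inv₀
  · fun_prop
  · intro y hy
    exact pow_ne_zero _ (wne ha hb hε hy)

lemma norm_bound_key (ha : a ≠ 0) (hb : 0 < b) (hε : 0 < ε) {β : ℝ} (hβ : 0 ≤ β)
    {g : ℝ → ℂ} {M : ℝ} (hM : 0 ≤ M) (hMle : ∀ y : ℝ, b ≤ y → ‖g y‖ ≤ M * y ^ β)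
    {δ : ℝ} (hδ : 0 < δ) (hδle : ∀ y : ℝ, b ≤ y → δ ≤ ‖(y : ℂ) + ww a ε y₀‖) (p : ℕ)
    {y : ℝ} (hy : b ≤ y) :
    ‖EE a ε y₀ y * (g y / ((y:ℂ) + ww a ε y₀)^p)‖ ≤
      M / δ^p * Real.exp (-ε * (y - y₀)^2 + β * y) := by
  have hy0 : 0 < y := lt_of_lt_of_le hb hy
  rw [norm_mul, norm_div, norm_pow, norm_EE]
  have h1 : ‖g y‖ / ‖(y:ℂ) + ww a ε y₀‖^p ≤ (M * y ^ β) / δ^p := by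
    apply div_le_div₀ (by positivity) (hMle y hy) (by positivity)
    exact pow_le_pow_left₀ hδ.le (hδle y hy) p
  calc Real.exp (-ε * (y - y₀)^2) * (‖g y‖ / ‖(y:ℂ) + ww a ε y₀‖^p)
      ≤ Real.exp (-ε * (y - y₀)^2) * ((M * y ^ β) / δ^p) := by
        apply mul_le_mul_of_nonneg_left h1 (Real.exp_nonneg _)
    _ ≤ Real.exp (-ε * (y - y₀)^2) * ((M * Real.exp (β * y)) / δ^p) := by
        apply mul_le_mul_of_nonneg_left _ (Real.exp_nonneg _)
        apply div_le_div_of_nonneg_right _ (by positivity)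
        exact mul_le_mul_of_nonneg_left (rpow_le_exp hβ hy0) hM
    _ = M / δ^p * (Real.exp (-ε * (y - y₀)^2) * Real.exp (β * y)) := by ring
    _ = M / δ^p * Real.exp (-ε * (y - y₀)^2 + β * y) := by rw [← Real.exp_add]

lemma int_key (ha : a ≠ 0) (hb : 0 < b) (hε : 0 < ε) {β : ℝ} (hβ : 0 ≤ β)
    {g : ℝ → ℂ} (hgc : ContinuousOn g (Ici b)) (hgb : PB b β g) (p : ℕ) :
    IntegrableOn (fun y : ℝ => EE a ε y₀ y * (g y / ((y:ℂ) + ww a ε y₀)^p)) (Ioi b) := by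
  obtain ⟨δ, hδ, hδle⟩ := lb (b := b) (y₀ := y₀) ha hb hε
  obtain ⟨M, hM, hMle⟩ := hgb
  apply Integrable.mono' (((integrable_gauss_exp hε y₀ β).const_mul (M / δ^p)).integrableOn)
  · apply ContinuousOn.aestronglyMeasurable _ measurableSet_Ioi
    apply ContinuousOn.mono _ (Ioi_subset_Ici le_rfl)
    have hE : ContinuousOn (EE a ε y₀) (Ici b) := by
      apply Continuous.continuousOn
      unfold EE
      fun_prop
    have : ContinuousOn (fun y : ℝ => g y / ((y:ℂ) + ww a ε y₀)^p) (Ici b) := by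
      simp only [div_eq_mul_inv]
      exact hgc.mul (cont_den ha hb hε p)
    exact hE.mul this
  · filter_upwards [ae_restrict_mem measurableSet_Ioi] with y hy
    exact norm_bound_key ha hb hε hβ hM hMle hδ hδle p (le_of_lt hy)

lemma tendsto_key (ha : a ≠ 0) (hb : 0 < b) (hε : 0 < ε) {β : ℝ} (hβ : 0 ≤ β)
    {g : ℝ → ℂ} (hgb : PB b β g) (p : ℕ) (C : ℂ) :
    Tendsto (fun y : ℝ => EE a ε y₀ y * (g y / ((y:ℂ) + ww a ε y₀)^p) * C) atTop (𝓝 0) := by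
  obtain ⟨δ, hδ, hδle⟩ := lb (b := b) (y₀ := y₀) ha hb hε
  obtain ⟨M, hM, hMle⟩ := hgb
  refine squeeze_zero_norm' (a := fun y => M / δ^p * Real.exp (-ε * (y - y₀)^2 + β * y) * ‖C‖) ?_ ?_
  · filter_upwards [eventually_ge_atTop b] with y hy
    rw [norm_mul]
    exact mul_le_mul_of_nonneg_right (norm_bound_key ha hb hε hβ hM hMle hδ hδle p hy)
      (norm_nonneg C)
  · rw [show (0:ℝ) = M / δ^p * 0 * ‖C‖ by ring]
    apply Tendsto.mul_const
    apply Tendsto.const_mul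
    apply Real.tendsto_exp_atBot.comp
    have : ∀ y : ℝ, -ε * (y - y₀)^2 + β * y =
        -ε * (y - (y₀ + β/(2*ε)))^2 + (β * y₀ + β^2/(4*ε)) := by
      intro y; field_simp; ring
    simp only [this]
    apply tendsto_atBot_add_const_right
    rw [tendsto_const_mul_atBot_of_neg (by linarith : -ε < 0)]
    have h1 : Tendsto (fun y : ℝ => y - (y₀ + β/(2*ε))) atTop atTop :=
      tendsto_atTop_add_const_right _ _ tendsto_id
    exact (tendsto_pow_atTop (two_ne_zero)).comp h1

lemma Iab_eq (a b ε y₀ : ℝ) (g : ℝ → ℂ) :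
    Iab a b ε y₀ g = ∫ y in Set.Ioi b, EE a ε y₀ y * g y := rfl

lemma step (ha : a ≠ 0) (hb : 0 < b) (hε : 0 < ε) (j : ℕ) (g g' : ℝ → ℂ)
    (hg : ∀ y ∈ Ici b, HasDerivWithinAt g (g' y) (Ici b) y)
    (hg'c : ContinuousOn g' (Ici b))
    (hgb : ∃ β, 0 ≤ β ∧ PB b β g) (hg'b : ∃ β, 0 ≤ β ∧ PB b β g') :
    Iab a b ε y₀ (fun y => g y / ((y:ℂ) + ww a ε y₀)^j)
      = -(EE a ε y₀ b * g b * ((2 * cc a ε)⁻¹ * ((((b:ℂ) + ww a ε y₀))^(j+1))⁻¹))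
        - (2 * cc a ε)⁻¹ * Iab a b ε y₀ (fun y => g' y / ((y:ℂ) + ww a ε y₀)^(j+1))
        + ((j:ℂ)+1) * (2 * cc a ε)⁻¹ *
            Iab a b ε y₀ (fun y => g y / ((y:ℂ) + ww a ε y₀)^(j+2)) := by
  obtain ⟨β₁, hβ₁, hgb₁⟩ := hgb
  obtain ⟨β₂, hβ₂, hgb₂⟩ := hg'b
  have hgc : ContinuousOn g (Ici b) := fun y hy => (hg y hy).continuousWithinAt
  have hc2 : (2 : ℂ) * cc a ε ≠ 0 := mul_ne_zero two_ne_zero (cc_ne ha)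
  have hEc : Continuous (EE a ε y₀) := by unfold EE; fun_prop
  set w := ww a ε y₀ with hw
  set c := cc a ε with hcdef
  set F : ℝ → ℂ := fun y => EE a ε y₀ y * g y * ((2*c)⁻¹ * (((y:ℂ)+w)^(j+1))⁻¹) with hF
  set W : ℝ → ℂ := fun y => EE a ε y₀ y * (g y / ((y:ℂ)+w)^j)
      + (2*c)⁻¹ * (EE a ε y₀ y * (g' y / ((y:ℂ)+w)^(j+1)))
      - ((j:ℂ)+1) * (2*c)⁻¹ * (EE a ε y₀ y * (g y / ((y:ℂ)+w)^(j+2))) with hWdef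
  have i1 := int_key (y₀ := y₀) ha hb hε hβ₁ hgc hgb₁ j
  have i2 := (int_key (y₀ := y₀) ha hb hε hβ₂ hg'c hgb₂ (j+1)).const_mul ((2*c)⁻¹)
  have i3 := (int_key (y₀ := y₀) ha hb hε hβ₁ hgc hgb₁ (j+2)).const_mul (((j:ℂ)+1) * (2*c)⁻¹)
  have intW : IntegrableOn W (Ioi b) := (i1.add i2).sub i3
  have hder : ∀ y ∈ Ioi b, HasDerivAt F (W y) y := by
    intro y hy
    have hyb : b ≤ y := le_of_lt hy
    have hne : (y:ℂ) + w ≠ 0 := wne ha hb hε hyb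
    have hgd : HasDerivAt g (g' y) y :=
      (hg y hyb).hasDerivAt (Ici_mem_nhds hy)
    have hp : HasDerivAt (fun z : ℂ => (z + w)^(j+1))
        ((((j:ℕ)+1 : ℕ) : ℂ) * ((y:ℂ) + w)^j * 1) (y:ℂ) := by
      have := ((hasDerivAt_id ((y:ℂ))).add_const w).fun_pow (j+1)
      simpa using this
    have hpne : ((y:ℂ) + w)^(j+1) ≠ 0 := pow_ne_zero _ hne
    have hinv := (hp.inv hpne).comp_ofReal
    have hprod := ((EE_hasDerivAt (ε := ε) (y₀ := y₀) ha y).mul hgd).mul (hinv.const_mul ((2*c)⁻¹))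
    refine hprod.congr_deriv (Eq.symm ?_)
    rw [hWdef]
    simp only [Pi.inv_apply, Pi.mul_apply, ← hw, ← hcdef, Nat.cast_add, Nat.cast_one]
    have hc0 : c ≠ 0 := cc_ne ha
    field_simp
    ring
  have hcont : ContinuousWithinAt F (Ici b) b := by
    have : ContinuousOn F (Ici b) := by
      apply ((hEc.continuousOn.mul hgc).mul ?_)
      exact (continuousOn_const.mul (cont_den ha hb hε (j+1)))
    exact this b self_mem_Ici
  have htend : Tendsto F atTop (𝓝 0) := by
    have := tendsto_key (y₀ := y₀) ha hb hε hβ₁ hgb₁ (j+1) ((2*c)⁻¹)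
    apply this.congr
    intro y
    rw [hF]
    simp only [div_eq_mul_inv]
    ring
  have key := integral_Ioi_of_hasDerivAt_of_tendsto hcont hder intW htend
  have split : ∫ y in Ioi b, W y =
      Iab a b ε y₀ (fun y => g y / ((y:ℂ)+w)^j)
      + (2*c)⁻¹ * Iab a b ε y₀ (fun y => g' y / ((y:ℂ)+w)^(j+1))
      - ((j:ℂ)+1) * (2*c)⁻¹ * Iab a b ε y₀ (fun y => g y / ((y:ℂ)+w)^(j+2)) := by
    rw [hWdef]
    have i12 : IntegrableOn (fun y : ℝ => EE a ε y₀ y * (g y / ((y:ℂ)+w)^j)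
        + (2*c)⁻¹ * (EE a ε y₀ y * (g' y / ((y:ℂ)+w)^(j+1)))) (Ioi b) := i1.add i2
    rw [integral_sub i12 i3, integral_add i1 i2]
    rw [MeasureTheory.integral_const_mul, MeasureTheory.integral_const_mul]
    rfl
  rw [split] at key
  have hFb : F b = EE a ε y₀ b * g b * ((2*c)⁻¹ * ((((b:ℂ) + w))^(j+1))⁻¹) := rfl
  linear_combination key - hFb

variable {n k l : ℕ} {α : ℝ} {f : ℝ → ℂ}

lemma fk_hasDeriv (hf : ContDiffOn ℝ n f (Ici b)) (hk : k < n) :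
    ∀ y ∈ Ici b, HasDerivWithinAt (iteratedDerivWithin k f (Ici b))
      (iteratedDerivWithin (k+1) f (Ici b) y) (Ici b) y := by
  intro y hy
  have hu : UniqueDiffOn ℝ (Ici b) := uniqueDiffOn_Ici b
  have hd : DifferentiableOn ℝ (iteratedDerivWithin k f (Ici b)) (Ici b) :=
    hf.differentiableOn_iteratedDerivWithin (by exact_mod_cast hk) hu
  have := (hd y hy).hasDerivWithinAt
  rwa [← iteratedDerivWithin_succ] at this

lemma fk_cont (hf : ContDiffOn ℝ n f (Ici b)) (hk : k ≤ n) :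
    ContinuousOn (iteratedDerivWithin k f (Ici b)) (Ici b) :=
  hf.continuousOn_iteratedDerivWithin (by exact_mod_cast hk) (uniqueDiffOn_Ici b)

lemma fk_bound (hb : 0 < b) (hα : 0 ≤ α) (hf : ContDiffOn ℝ n f (Ici b))
    (hfn : ∃ M, 0 ≤ M ∧ ∀ y ∈ Ici b, ‖iteratedDerivWithin n f (Ici b) y‖ ≤ M * y ^ α) :
    ∀ d k, k + d = n → ∃ β, 0 ≤ β ∧ PB b β (iteratedDerivWithin k f (Ici b)) := by
  intro d
  induction d with
  | zero =>
    intro k hk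
    obtain ⟨M, hM, hMle⟩ := hfn
    exact ⟨α, hα, M, hM, fun y hy => by simpa [← hk] using hMle y hy⟩
  | succ d ih =>
    intro k hk
    obtain ⟨β, hβ, M, hM, hMle⟩ := ih (k+1) (by omega)
    have hkn : k < n := by omega
    refine ⟨β + 1, by linarith,
      ‖iteratedDerivWithin k f (Ici b) b‖ / b ^ (β+1) + M, by positivity, fun y hy => ?_⟩
    have hby : 0 < y := lt_of_lt_of_le hb hy
    have hMVT : ‖iteratedDerivWithin k f (Ici b) y - iteratedDerivWithin k f (Ici b) b‖ ≤
        (M * y ^ β) * ‖y - b‖ := by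
      apply Convex.norm_image_sub_le_of_norm_hasDerivWithin_le
        (f' := fun x => iteratedDerivWithin (k+1) f (Ici b) x) ?_ ?_ (convex_Icc b y)
        (left_mem_Icc.mpr hy) (right_mem_Icc.mpr hy)
      · intro x hx
        exact (fk_hasDeriv hf hkn x (Icc_subset_Ici_self hx)).mono Icc_subset_Ici_self
      · intro x hx
        calc ‖iteratedDerivWithin (k+1) f (Ici b) x‖ ≤ M * x ^ β := hMle x hx.1
        _ ≤ M * y ^ β := by
            apply mul_le_mul_of_nonneg_left _ hM
            exact Real.rpow_le_rpow (le_of_lt (lt_of_lt_of_le hb hx.1)) hx.2 hβ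
    have h1 : ‖iteratedDerivWithin k f (Ici b) y‖ ≤
        ‖iteratedDerivWithin k f (Ici b) b‖ + M * y ^ β * (y - b) := by
      have := norm_sub_norm_le (iteratedDerivWithin k f (Ici b) y)
        (iteratedDerivWithin k f (Ici b) b)
      rw [Real.norm_eq_abs, abs_of_nonneg (by linarith : (0:ℝ) ≤ y - b)] at hMVT
      linarith [this.trans hMVT]
    have hyβ : y ^ β * y = y ^ (β + 1) := by
      rw [Real.rpow_add_one (ne_of_gt hby)]
    have h2 : M * y ^ β * (y - b) ≤ M * y ^ (β+1) := by
      calc M * y ^ β * (y - b) ≤ M * y ^ β * y := by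
            apply mul_le_mul_of_nonneg_left (by linarith) (by positivity)
      _ = M * y ^ (β+1) := by rw [mul_assoc, hyβ]
    have h3 : ‖iteratedDerivWithin k f (Ici b) b‖ ≤
        ‖iteratedDerivWithin k f (Ici b) b‖ / b ^ (β+1) * y ^ (β+1) := by
      rw [div_mul_eq_mul_div, le_div_iff₀ (Real.rpow_pos_of_pos hb _)]
      apply mul_le_mul_of_nonneg_left _ (norm_nonneg _)
      exact Real.rpow_le_rpow hb.le hy (by linarith)
    calc ‖iteratedDerivWithin k f (Ici b) y‖ ≤
        ‖iteratedDerivWithin k f (Ici b) b‖ + M * y ^ (β+1) := by linarith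
    _ ≤ ‖iteratedDerivWithin k f (Ici b) b‖ / b ^ (β+1) * y ^ (β+1) + M * y ^ (β+1) := by
        linarith
    _ = (‖iteratedDerivWithin k f (Ici b) b‖ / b ^ (β+1) + M) * y ^ (β+1) := by ring

def Jint (a b ε y₀ : ℝ) (f : ℝ → ℂ) (k l : ℕ) : ℂ :=
  Iab a b ε y₀ (fun y => iteratedDerivWithin k f (Ici b) y / ((y:ℂ) + ww a ε y₀)^(k + 2*l))

def Bd (a b ε y₀ : ℝ) (f : ℝ → ℂ) (k l : ℕ) : ℂ :=
  EE a ε y₀ b * iteratedDerivWithin k f (Ici b) b / ((b:ℂ) + ww a ε y₀)^(k+1+2*l)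

lemma Jstep (ha : a ≠ 0) (hb : 0 < b) (hε : 0 < ε) (hα : 0 ≤ α)
    (hf : ContDiffOn ℝ n f (Ici b))
    (hfn : ∃ M, 0 ≤ M ∧ ∀ y ∈ Ici b, ‖iteratedDerivWithin n f (Ici b) y‖ ≤ M * y ^ α)
    (hk : k < n) (l : ℕ) :
    Jint a b ε y₀ f k l = -((2 * cc a ε)⁻¹ * Bd a b ε y₀ f k l)
      - (2 * cc a ε)⁻¹ * Jint a b ε y₀ f (k+1) l
      + ((k:ℂ) + 1 + 2*l) * (2 * cc a ε)⁻¹ * Jint a b ε y₀ f k (l+1) := by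
  have hs := step (y₀ := y₀) ha hb hε (k + 2*l) (iteratedDerivWithin k f (Ici b))
    (iteratedDerivWithin (k+1) f (Ici b)) (fk_hasDeriv hf hk)
    (fk_cont hf (by omega))
    (fk_bound hb hα hf hfn (n - k) k (by omega))
    (fk_bound hb hα hf hfn (n - (k+1)) (k+1) (by omega))
  rw [Jint, hs, show k + 2*l + 1 = k + 1 + 2*l by ring, show k + 2*l + 2 = k + 2*(l+1) by ring]
  rw [Bd]
  have hcast : ((k + 2*l : ℕ) : ℂ) + 1 = (k:ℂ) + 1 + 2*l := by push_cast; ring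
  rw [hcast]
  have e2 : k + 1 + 2*l = (k+1) + 2*l := by ring
  rw [e2]
  simp only [Jint]
  ring

lemma expand (ha : a ≠ 0) (hb : 0 < b) (hε : 0 < ε) (hα : 0 ≤ α)
    (hf : ContDiffOn ℝ n f (Ici b))
    (hfn : ∃ M, 0 ≤ M ∧ ∀ y ∈ Ici b, ‖iteratedDerivWithin n f (Ici b) y‖ ≤ M * y ^ α) :
    ∀ q k0, k0 + q = n → ∀ l,
    Jint a b ε y₀ f k0 l =
      (∑ i ∈ Finset.range q, (-1:ℂ)^(i+1) * ((2 * cc a ε)⁻¹)^(i+1) * Bd a b ε y₀ f (k0+i) l)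
      + (∑ i ∈ Finset.range q,
          (-1:ℂ)^i * ((k0:ℂ)+(i:ℂ)+1+2*(l:ℂ)) * ((2 * cc a ε)⁻¹)^(i+1) *
            Jint a b ε y₀ f (k0+i) (l+1))
      + (-(2 * cc a ε)⁻¹)^q * Jint a b ε y₀ f n l := by
  intro q
  induction q with
  | zero =>
    intro k0 hk0 l
    have : k0 = n := by omega
    subst this
    simp
  | succ q ih =>
    intro k0 hk0 l
    have hk0n : k0 < n := by omega
    rw [Jstep ha hb hε hα hf hfn hk0n l, ih (k0+1) (by omega) l]
    rw [Finset.sum_range_succ', Finset.sum_range_succ']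
    have hA : (∑ i ∈ Finset.range q,
        (-1:ℂ)^((i+1)+1) * ((2 * cc a ε)⁻¹)^((i+1)+1) * Bd a b ε y₀ f (k0+(i+1)) l)
        = (-(2 * cc a ε)⁻¹) * ∑ i ∈ Finset.range q,
            (-1:ℂ)^(i+1) * ((2 * cc a ε)⁻¹)^(i+1) * Bd a b ε y₀ f ((k0+1)+i) l := by
      rw [Finset.mul_sum]
      apply Finset.sum_congr rfl
      intro i _
      rw [show (k0+1)+i = k0+(i+1) by omega]
      ring
    have hB : (∑ i ∈ Finset.range q,
        (-1:ℂ)^(i+1) * ((k0:ℂ)+((i+1:ℕ):ℂ)+1+2*(l:ℂ)) * ((2 * cc a ε)⁻¹)^((i+1)+1) *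
          Jint a b ε y₀ f (k0+(i+1)) (l+1))
        = (-(2 * cc a ε)⁻¹) * ∑ i ∈ Finset.range q,
            (-1:ℂ)^i * (((k0+1:ℕ):ℂ)+(i:ℂ)+1+2*(l:ℂ)) * ((2 * cc a ε)⁻¹)^(i+1) *
              Jint a b ε y₀ f ((k0+1)+i) (l+1) := by
      rw [Finset.mul_sum]
      apply Finset.sum_congr rfl
      intro i _
      rw [show (k0+1)+i = k0+(i+1) by omega]
      push_cast
      ring
    rw [hA, hB]
    simp only [Nat.add_zero, Nat.cast_zero, pow_one, pow_zero]
    push_cast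
    ring

lemma Ccoef_zero (k : ℕ) : Ccoef k 0 = (-(1:ℝ)/2)^(k+1) := by rw [Ccoef]

lemma Ccoef_succ (k l : ℕ) : Ccoef k (l+1) =
    ∑ i ∈ Finset.range (k + 1),
      (-1 : ℝ) ^ (i + k) * ((i : ℝ) + 1 + 2 * l) / 2 ^ (k + 1 - i) * Ccoef i l := by
  rw [Ccoef]

lemma sum_tri (n : ℕ) (F : ℕ → ℕ → ℂ) :
    ∑ k ∈ Finset.range n, ∑ i ∈ Finset.range (n - k), F k i
      = ∑ j ∈ Finset.range n, ∑ k ∈ Finset.range (j+1), F k (j - k) := by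
  rw [Finset.sum_sigma', Finset.sum_sigma']
  refine Finset.sum_nbij' (fun x => ⟨x.1 + x.2, x.1⟩) (fun x => ⟨x.2, x.1 - x.2⟩)
    ?_ ?_ ?_ ?_ ?_
  · rintro ⟨x, y⟩ h
    simp only [Finset.mem_sigma, Finset.mem_range] at h ⊢
    omega
  · rintro ⟨x, y⟩ h
    simp only [Finset.mem_sigma, Finset.mem_range] at h ⊢
    omega
  · rintro ⟨x, y⟩ h
    simp only [Nat.add_sub_cancel_left]
  · rintro ⟨x, y⟩ h
    simp only [Finset.mem_sigma, Finset.mem_range] at h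
    have : y + (x - y) = x := by omega
    exact Sigma.ext this (heq_of_eq rfl)
  · rintro ⟨x, y⟩ h
    simp only [Nat.add_sub_cancel_left]


lemma key_pow {c : ℂ} (hc : c ≠ 0) (t : ℕ) :
    ((-(1:ℂ))/2)^t / c^t = (-1:ℂ)^t * ((2 * c)⁻¹)^t := by
  rw [div_eq_mul_inv, ← inv_pow, ← mul_pow, ← mul_pow]
  congr 1
  rw [mul_inv]
  ring

lemma main (ha : a ≠ 0) (hb : 0 < b) (hε : 0 < ε) (hn : 0 < n) (hα : 0 ≤ α)
    (hf : ContDiffOn ℝ n f (Ici b))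
    (hfn : ∃ M, 0 ≤ M ∧ ∀ y ∈ Ici b, ‖iteratedDerivWithin n f (Ici b) y‖ ≤ M * y ^ α) :
    ∀ m : ℕ, Jint a b ε y₀ f 0 0 =
      (∑ k ∈ Finset.range n, ∑ l ∈ Finset.range (m+1),
        (Ccoef k l : ℂ) * Bd a b ε y₀ f k l / (cc a ε)^(k+1+l))
      + (∑ l ∈ Finset.range (m+1),
          (Ccoef (n-1) l : ℂ) / (cc a ε)^(n+l) * Jint a b ε y₀ f n l)
      - ∑ k ∈ Finset.range n,
          ((k:ℂ)+1+2*(m:ℂ)) * (Ccoef k m : ℂ) / (cc a ε)^(k+1+m) * Jint a b ε y₀ f k (m+1) := by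
  have hc : cc a ε ≠ 0 := cc_ne ha
  have hc2 : (2:ℂ) * cc a ε ≠ 0 := mul_ne_zero two_ne_zero hc
  intro m
  induction m with
  | zero =>
    rw [expand ha hb hε hα hf hfn n 0 (by omega) 0]
    simp only [Finset.sum_range_one, Nat.zero_add, zero_add, Nat.add_zero, Nat.cast_zero,
      mul_zero, add_zero, Ccoef_zero]
    have h1 : (∑ i ∈ Finset.range n,
        (-1:ℂ)^(i+1) * ((2 * cc a ε)⁻¹)^(i+1) * Bd a b ε y₀ f i 0)
        = ∑ k ∈ Finset.range n,
          ((((-(1:ℝ)/2)^(k+1) : ℝ)):ℂ) * Bd a b ε y₀ f k 0 / (cc a ε)^(k+1) := by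
      apply Finset.sum_congr rfl
      intro k _
      push_cast
      simp only [mul_inv, div_eq_mul_inv, mul_pow, inv_pow]
      ring
    have h2 : (∑ i ∈ Finset.range n,
        (-1:ℂ)^i * ((i:ℂ)+1) * ((2 * cc a ε)⁻¹)^(i+1) * Jint a b ε y₀ f i (0+1))
        = -∑ k ∈ Finset.range n,
          ((k:ℂ)+1) * ((((-(1:ℝ)/2)^(k+1) : ℝ)):ℂ) / (cc a ε)^(k+1) *
            Jint a b ε y₀ f k (0+1) := by
      rw [← Finset.sum_neg_distrib]
      apply Finset.sum_congr rfl
      intro k _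
      push_cast
      simp only [mul_inv, div_eq_mul_inv, mul_pow, inv_pow]
      ring
    have h3 : (-(2 * cc a ε)⁻¹)^n * Jint a b ε y₀ f n 0
        = ((((-(1:ℝ)/2)^(n-1+1) : ℝ)):ℂ) / (cc a ε)^n * Jint a b ε y₀ f n 0 := by
      rw [show n-1+1 = n by omega, neg_pow]
      push_cast
      simp only [mul_inv, div_eq_mul_inv, mul_pow, inv_pow]
      ring
    rw [h1, h2, h3]
    ring
  | succ m ih =>
    rw [ih]
    have P1 : (∑ k ∈ Finset.range n, ∑ l ∈ Finset.range (m+1+1),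
          (Ccoef k l : ℂ) * Bd a b ε y₀ f k l / (cc a ε)^(k+1+l))
        = (∑ k ∈ Finset.range n, ∑ l ∈ Finset.range (m+1),
            (Ccoef k l : ℂ) * Bd a b ε y₀ f k l / (cc a ε)^(k+1+l))
          + ∑ k ∈ Finset.range n,
              (Ccoef k (m+1) : ℂ) * Bd a b ε y₀ f k (m+1) / (cc a ε)^(k+1+(m+1)) := by
      simp only [Finset.sum_range_succ]
      rw [Finset.sum_add_distrib]
    have P2 : (∑ l ∈ Finset.range (m+1+1),
          (Ccoef (n-1) l : ℂ) / (cc a ε)^(n+l) * Jint a b ε y₀ f n l)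
        = (∑ l ∈ Finset.range (m+1),
            (Ccoef (n-1) l : ℂ) / (cc a ε)^(n+l) * Jint a b ε y₀ f n l)
          + (Ccoef (n-1) (m+1) : ℂ) / (cc a ε)^(n+(m+1)) * Jint a b ε y₀ f n (m+1) :=
      Finset.sum_range_succ _ _
    rw [P1, P2]
    have key : (∑ k ∈ Finset.range n,
        ((k:ℂ)+1+2*(m:ℂ)) * (Ccoef k m : ℂ) / (cc a ε)^(k+1+m) * Jint a b ε y₀ f k (m+1))
        = (∑ k ∈ Finset.range n, ((k:ℂ)+1+2*((m+1:ℕ):ℂ)) * (Ccoef k (m+1) : ℂ) /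
              (cc a ε)^(k+1+(m+1)) * Jint a b ε y₀ f k (m+1+1))
          - (∑ k ∈ Finset.range n,
              (Ccoef k (m+1) : ℂ) * Bd a b ε y₀ f k (m+1) / (cc a ε)^(k+1+(m+1)))
          - (Ccoef (n-1) (m+1) : ℂ) / (cc a ε)^(n+(m+1)) * Jint a b ε y₀ f n (m+1) := by
      have e1 : (∑ k ∈ Finset.range n,
          ((k:ℂ)+1+2*(m:ℂ)) * (Ccoef k m : ℂ) / (cc a ε)^(k+1+m) * Jint a b ε y₀ f k (m+1))
          = (∑ k ∈ Finset.range n, ∑ i ∈ Finset.range (n-k),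
              ((k:ℂ)+1+2*(m:ℂ)) * (Ccoef k m : ℂ) / (cc a ε)^(k+1+m) *
                ((-1:ℂ)^(i+1) * ((2 * cc a ε)⁻¹)^(i+1) * Bd a b ε y₀ f (k+i) (m+1)))
            + (∑ k ∈ Finset.range n, ∑ i ∈ Finset.range (n-k),
              ((k:ℂ)+1+2*(m:ℂ)) * (Ccoef k m : ℂ) / (cc a ε)^(k+1+m) *
                ((-1:ℂ)^i * ((k:ℂ)+(i:ℂ)+1+2*((m+1:ℕ):ℂ)) * ((2 * cc a ε)⁻¹)^(i+1) *
                  Jint a b ε y₀ f (k+i) (m+1+1)))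
            + ∑ k ∈ Finset.range n,
              ((k:ℂ)+1+2*(m:ℂ)) * (Ccoef k m : ℂ) / (cc a ε)^(k+1+m) *
                ((-(2 * cc a ε)⁻¹)^(n-k) * Jint a b ε y₀ f n (m+1)) := by
        rw [← Finset.sum_add_distrib, ← Finset.sum_add_distrib]
        apply Finset.sum_congr rfl
        intro k hk
        simp only [Finset.mem_range] at hk
        rw [expand ha hb hε hα hf hfn (n-k) k (by omega) (m+1)]
        rw [mul_add, mul_add, Finset.mul_sum, Finset.mul_sum]
      have HA : (∑ k ∈ Finset.range n, ∑ i ∈ Finset.range (n-k),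
            ((k:ℂ)+1+2*(m:ℂ)) * (Ccoef k m : ℂ) / (cc a ε)^(k+1+m) *
              ((-1:ℂ)^(i+1) * ((2 * cc a ε)⁻¹)^(i+1) * Bd a b ε y₀ f (k+i) (m+1)))
          = -∑ j ∈ Finset.range n,
              (Ccoef j (m+1) : ℂ) * Bd a b ε y₀ f j (m+1) / (cc a ε)^(j+1+(m+1)) := by
        rw [sum_tri n (fun k i => ((k:ℂ)+1+2*(m:ℂ)) * (Ccoef k m : ℂ) / (cc a ε)^(k+1+m) *
              ((-1:ℂ)^(i+1) * ((2 * cc a ε)⁻¹)^(i+1) * Bd a b ε y₀ f (k+i) (m+1)))]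
        rw [← Finset.sum_neg_distrib]
        apply Finset.sum_congr rfl
        intro j hj
        simp only [Finset.mem_range] at hj
        rw [Ccoef_succ j m]
        push_cast
        rw [Finset.sum_mul, Finset.sum_div, ← Finset.sum_neg_distrib]
        apply Finset.sum_congr rfl
        intro k hk
        simp only [Finset.mem_range] at hk
        obtain ⟨e, rfl⟩ : ∃ e, j = k + e := Nat.exists_eq_add_of_le (by omega)
        simp only [Nat.add_sub_cancel_left]
        rw [show k+e+1-k = e+1 by omega, show k+(k+e) = 2*k+e by omega]
        rw [pow_add ((-1:ℂ)) (2*k) e, pow_mul]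
        push_cast
        norm_num
        simp only [mul_inv, div_eq_mul_inv, mul_pow, inv_pow]
        ring
      have HB : (∑ k ∈ Finset.range n, ∑ i ∈ Finset.range (n-k),
            ((k:ℂ)+1+2*(m:ℂ)) * (Ccoef k m : ℂ) / (cc a ε)^(k+1+m) *
              ((-1:ℂ)^i * ((k:ℂ)+(i:ℂ)+1+2*((m+1:ℕ):ℂ)) * ((2 * cc a ε)⁻¹)^(i+1) *
                Jint a b ε y₀ f (k+i) (m+1+1)))
          = ∑ j ∈ Finset.range n, ((j:ℂ)+1+2*((m+1:ℕ):ℂ)) * (Ccoef j (m+1) : ℂ) /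
              (cc a ε)^(j+1+(m+1)) * Jint a b ε y₀ f j (m+1+1) := by
        rw [sum_tri n (fun k i => ((k:ℂ)+1+2*(m:ℂ)) * (Ccoef k m : ℂ) / (cc a ε)^(k+1+m) *
              ((-1:ℂ)^i * ((k:ℂ)+(i:ℂ)+1+2*((m+1:ℕ):ℂ)) * ((2 * cc a ε)⁻¹)^(i+1) *
                Jint a b ε y₀ f (k+i) (m+1+1)))]
        apply Finset.sum_congr rfl
        intro j hj
        simp only [Finset.mem_range] at hj
        rw [Ccoef_succ j m]
        push_cast
        rw [Finset.mul_sum, Finset.sum_div, Finset.sum_mul]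
        apply Finset.sum_congr rfl
        intro k hk
        simp only [Finset.mem_range] at hk
        obtain ⟨e, rfl⟩ : ∃ e, j = k + e := Nat.exists_eq_add_of_le (by omega)
        simp only [Nat.add_sub_cancel_left]
        rw [show k+e+1-k = e+1 by omega, show k+(k+e) = 2*k+e by omega]
        rw [pow_add ((-1:ℂ)) (2*k) e, pow_mul]
        push_cast
        norm_num
        simp only [mul_inv, div_eq_mul_inv, mul_pow, inv_pow]
        ring
      have HC : (∑ k ∈ Finset.range n,
            ((k:ℂ)+1+2*(m:ℂ)) * (Ccoef k m : ℂ) / (cc a ε)^(k+1+m) *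
              ((-(2 * cc a ε)⁻¹)^(n-k) * Jint a b ε y₀ f n (m+1)))
          = -((Ccoef (n-1) (m+1) : ℂ) / (cc a ε)^(n+(m+1)) * Jint a b ε y₀ f n (m+1)) := by
        rw [Ccoef_succ (n-1) m, show (n-1)+1 = n by omega]
        push_cast
        rw [Finset.sum_div, Finset.sum_mul, ← Finset.sum_neg_distrib]
        apply Finset.sum_congr rfl
        intro k hk
        simp only [Finset.mem_range] at hk
        rw [show n-k = (n-k-1)+1 by omega, show k+(n-1) = 2*k+(n-k-1) by omega,
          show n+(m+1) = k+1+m+((n-k-1)+1) by omega]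
        rw [neg_pow, pow_add ((-1:ℂ)) (2*k) (n-k-1), pow_mul]
        norm_num
        simp only [mul_inv, div_eq_mul_inv, mul_pow, inv_pow]
        ring
      rw [e1, HA, HB, HC]
      ring
    rw [key]
    ring


end S11

/-- the iterated integration by parts formula for `I_{a,b}^{ε,y₀}(f)`. -/
theorem stmt11 (a : ℝ) (ha : a ≠ 0) (b : ℝ) (hb : 0 < b) (ε : ℝ) (hε : 0 < ε) (y₀ : ℝ)
    (m : ℕ) (n : ℕ) (hn : 0 < n) (α : ℝ) (hα : 0 ≤ α) (f : ℝ → ℂ) (hf : MemCnAlpha b n α f) :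
    Iab a b ε y₀ f =
      (∑ k ∈ Finset.range n, ∑ l ∈ Finset.range (m + 1),
        (Ccoef k l : ℂ) * Complex.exp (Complex.I * a * b ^ 2 - ε * ((b : ℂ) - y₀) ^ 2) *
            iteratedDerivWithin k f (Set.Ici b) b /
          ((Complex.I * a - ε) ^ (k + 1 + l) *
            ((b : ℂ) + ε * y₀ / (Complex.I * a - ε)) ^ (k + 1 + 2 * l)))
      + (∑ l ∈ Finset.range (m + 1),
          (Ccoef (n - 1) l : ℂ) / (Complex.I * a - ε) ^ (n + l) *
            Iab a b ε y₀ (fun y => iteratedDerivWithin n f (Set.Ici b) y /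
              ((y : ℂ) + ε * y₀ / (Complex.I * a - ε)) ^ (n + 2 * l)))
      - ∑ k ∈ Finset.range n,
          ((k : ℂ) + 1 + 2 * m) * (Ccoef k m : ℂ) / (Complex.I * a - ε) ^ (k + 1 + m) *
            Iab a b ε y₀ (fun y => iteratedDerivWithin k f (Set.Ici b) y /
              ((y : ℂ) + ε * y₀ / (Complex.I * a - ε)) ^ (k + 2 + 2 * m)) := by
  obtain ⟨hf1, hf2⟩ := hf
  have h0 : Iab a b ε y₀ f = S11.Jint a b ε y₀ f 0 0 := by
    rw [S11.Jint]
    congr 1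
    funext y
    simp
  rw [h0, S11.main ha hb hε hn hα hf1 hf2 m]
  have hExp : S11.EE a ε y₀ b =
      Complex.exp (Complex.I * a * b ^ 2 - ε * ((b : ℂ) - y₀) ^ 2) := by
    rw [S11.EE, ← Complex.exp_add]
    congr 1
    ring
  have hB : (∑ k ∈ Finset.range n, ∑ l ∈ Finset.range (m+1),
        (Ccoef k l : ℂ) * S11.Bd a b ε y₀ f k l / (S11.cc a ε)^(k+1+l))
      = ∑ k ∈ Finset.range n, ∑ l ∈ Finset.range (m + 1),
        (Ccoef k l : ℂ) * Complex.exp (Complex.I * a * b ^ 2 - ε * ((b : ℂ) - y₀) ^ 2) *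
            iteratedDerivWithin k f (Set.Ici b) b /
          ((Complex.I * a - ε) ^ (k + 1 + l) *
            ((b : ℂ) + ε * y₀ / (Complex.I * a - ε)) ^ (k + 1 + 2 * l)) := by
    refine Finset.sum_congr rfl fun k _ => Finset.sum_congr rfl fun l _ => ?_
    rw [S11.Bd, hExp]
    rw [show ((Complex.I * (a:ℂ) - (ε:ℂ)) ^ (k + 1 + l) *
        ((b : ℂ) + (ε:ℂ) * (y₀:ℂ) / (Complex.I * a - ε)) ^ (k + 1 + 2 * l))
      = (S11.cc a ε) ^ (k + 1 + l) * ((b:ℂ) + S11.ww a ε y₀) ^ (k + 1 + 2 * l) from rfl]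
    rw [← div_div]
    ring
  have hT : (∑ l ∈ Finset.range (m+1),
        (Ccoef (n-1) l : ℂ) / (S11.cc a ε)^(n+l) * S11.Jint a b ε y₀ f n l)
      = ∑ l ∈ Finset.range (m + 1),
          (Ccoef (n - 1) l : ℂ) / (Complex.I * a - ε) ^ (n + l) *
            Iab a b ε y₀ (fun y => iteratedDerivWithin n f (Set.Ici b) y /
              ((y : ℂ) + ε * y₀ / (Complex.I * a - ε)) ^ (n + 2 * l)) := by
    refine Finset.sum_congr rfl fun l _ => ?_
    rw [S11.Jint]
    rfl
  have hR : (∑ k ∈ Finset.range n,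
        ((k:ℂ)+1+2*(m:ℂ)) * (Ccoef k m : ℂ) / (S11.cc a ε)^(k+1+m) *
          S11.Jint a b ε y₀ f k (m+1))
      = ∑ k ∈ Finset.range n,
          ((k : ℂ) + 1 + 2 * m) * (Ccoef k m : ℂ) / (Complex.I * a - ε) ^ (k + 1 + m) *
            Iab a b ε y₀ (fun y => iteratedDerivWithin k f (Set.Ici b) y /
              ((y : ℂ) + ε * y₀ / (Complex.I * a - ε)) ^ (k + 2 + 2 * m)) := by
    refine Finset.sum_congr rfl fun k _ => ?_
    rw [S11.Jint, show k + 2*(m+1) = k+2+2*m by omega]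
    rfl
  rw [hB, hT, hR]
end
end
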